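/- arXiv:2506.12177 — 4 statements merged into one kernel-verified Lean document; each statement's English description precedes it below -/
import Mathlib

section
/- Suppose E[Y(a) | U, X] = τ(a, X)' g(U, X) for each a, and Y(a) ⫫ Z | (U, X). Then E[Y(a) | Z, X] = τ(a, X)' E[g(U, X) | Z, X] almost surely, and hence the CATE satisfies E[Y(a₁) − Y(a₀) | Z, X] = (τ(a₁, X) − τ(a₀, X))' E[g(U, X) | Z, X]. -/
open Matrix MeasureTheory ProbabilityTheory

open scoped ProbabilityTheory MeasureTheory NNReal ENNReal

section Aux

variable {Ω : Type*} [mΩ : MeasurableSpace Ω] [StandardBorelSpace Ω]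
  {μ : Measure Ω} [IsProbabilityMeasure μ]

/-- Auxiliary: integral of a dot product with a constant vector. -/
lemma integral_const_dotProduct {q : ℕ} {ν : Measure Ω} (v : Fin q → ℝ) {G : Ω → Fin q → ℝ}
    (hG : Integrable G ν) :
    ∫ ω, v ⬝ᵥ G ω ∂ν = v ⬝ᵥ ∫ ω, G ω ∂ν := by
  have hcomp : ∀ i : Fin q, Integrable (fun ω => G ω i) ν := fun i =>
    (ContinuousLinearMap.proj (R := ℝ) (φ := fun _ : Fin q => ℝ) i).integrable_comp hG
  simp only [dotProduct]
  rw [integral_finset_sum (μ := ν) Finset.univ (f := fun i ω => v i * G ω i)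
    (fun i _ => (hcomp i).const_mul (v i))]
  refine Finset.sum_congr rfl fun i _ => ?_
  rw [integral_const_mul]
  congr 1
  have := (ContinuousLinearMap.proj (R := ℝ) (φ := fun _ : Fin q => ℝ) i).integral_comp_comm hG
  simpa using this

/-- Auxiliary: the set-integral identity coming from conditional independence, proved by
`MemLp` induction. -/
lemma lemP {γ : Type*} [MeasurableSpace γ] {m' : MeasurableSpace Ω} (hm' : m' ≤ mΩ)
    {f : Ω → ℝ} (hf : Measurable[mΩ] f) (hfint : Integrable f μ)
    {Z : Ω → γ} (hZ : Measurable[mΩ] Z)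
    (hCI : CondIndepFun m' hm' f Z μ)
    {t : Set γ} (ht : MeasurableSet t) (s : Set Ω) (hs : MeasurableSet[m'] s) :
    ∫ ω in s, (Z ⁻¹' t).indicator f ω ∂μ
      = ∫ ω in s, (μ[f|m']) ω * (μ⟦Z ⁻¹' t|m'⟧) ω ∂μ := by
  letI : MeasurableSpace Ω := mΩ
  set B := Z ⁻¹' t with hB_def
  have hB : MeasurableSet[mΩ] B := hZ ht
  set w : Ω → ℝ := μ⟦B|m'⟧ with hw_def
  have hw_sm : StronglyMeasurable[mΩ] w := stronglyMeasurable_condExp.mono hm'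
  have hw_bdd : ∀ᵐ ω ∂μ, ‖w ω‖ ≤ 1 := by
    have h1 : ∀ᵐ ω ∂μ, |B.indicator (fun _ => (1 : ℝ)) ω| ≤ ((1 : ℝ≥0) : ℝ) := by
      filter_upwards with ω
      by_cases h : ω ∈ B <;> simp [h]
    filter_upwards [ae_bdd_condExp_of_ae_bdd (m := m') h1] with ω hω
    simpa [Real.norm_eq_abs] using hω
  have hmulint : ∀ {h : Ω → ℝ}, Integrable h μ →
      Integrable (fun ω => (μ[h|m']) ω * w ω) μ := by
    intro h hh
    exact (integrable_condExp.bdd_mul hw_sm.aestronglyMeasurable hw_bdd).congr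
      (Filter.Eventually.of_forall fun ω => mul_comm _ _)
  have key : ∀ ⦃h : Ω → ℝ⦄, MemLp h 1 μ →
      AEStronglyMeasurable[MeasurableSpace.comap f inferInstance] h μ →
      ∀ s, MeasurableSet[m'] s →
        ∫ ω in s, B.indicator h ω ∂μ = ∫ ω in s, (μ[h|m']) ω * w ω ∂μ := by
    refine MemLp.induction_stronglyMeasurable hf.comap_le ENNReal.one_ne_top
      (fun h => ∀ s, MeasurableSet[m'] s →
        ∫ ω in s, B.indicator h ω ∂μ = ∫ ω in s, (μ[h|m']) ω * w ω ∂μ) ?_ ?_ ?_ ?_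
    · -- indicator case
      rintro c A ⟨t', ht', rfl⟩ - s hs
      have hA : MeasurableSet[mΩ] (f ⁻¹' t') := hf ht'
      have hAB : μ⟦f ⁻¹' t' ∩ B|m'⟧ =ᵐ[μ]
          fun ω => (μ⟦f ⁻¹' t'|m'⟧) ω * w ω :=
        (condIndepFun_iff_condExp_inter_preimage_eq_mul hf hZ).mp hCI t' t ht' ht
      have hcond : μ[(f ⁻¹' t').indicator (fun _ => c)|m'] =ᵐ[μ]
          fun ω => c * (μ⟦f ⁻¹' t'|m'⟧) ω := by
        have hrw : (f ⁻¹' t').indicator (fun _ => c)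
            = c • (f ⁻¹' t').indicator (fun _ => (1 : ℝ)) := by
          funext ω; by_cases hω : ω ∈ f ⁻¹' t' <;> simp [hω]
        rw [hrw]
        filter_upwards [condExp_smul (m := m') (μ := μ) c
          ((f ⁻¹' t').indicator (fun _ => (1 : ℝ)))] with ω hω
        simpa using hω
      have hrhs : ∫ ω in s, (μ[(f ⁻¹' t').indicator (fun _ => c)|m']) ω * w ω ∂μ
          = c * ∫ ω in s, (μ⟦f ⁻¹' t' ∩ B|m'⟧) ω ∂μ := by
        rw [← integral_const_mul]
        refine integral_congr_ae (ae_restrict_of_ae ?_)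
        filter_upwards [hcond, hAB] with ω h1 h2
        rw [h1, h2]; ring
      rw [hrhs, setIntegral_condExp hm'
        ((integrable_const (1 : ℝ)).indicator (hA.inter hB)) hs,
        setIntegral_indicator (hA.inter hB), setIntegral_const]
      simp only [Set.indicator_indicator]
      rw [setIntegral_indicator (hB.inter hA), setIntegral_const]
      rw [Set.inter_comm B (f ⁻¹' t')]
      simp [mul_comm]
    · -- additivity
      intro h₁ h₂ hdisj hL₁ hL₂ hm₁ hm₂ hQ₁ hQ₂ s hs
      have hi₁ : Integrable h₁ μ := memLp_one_iff_integrable.mp hL₁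
      have hi₂ : Integrable h₂ μ := memLp_one_iff_integrable.mp hL₂
      have hindadd : B.indicator (h₁ + h₂) = B.indicator h₁ + B.indicator h₂ := by
        funext ω; by_cases h : ω ∈ B <;> simp [h]
      have lhs : ∫ ω in s, B.indicator (h₁ + h₂) ω ∂μ
          = ∫ ω in s, B.indicator h₁ ω ∂μ + ∫ ω in s, B.indicator h₂ ω ∂μ := by
        rw [hindadd]
        exact integral_add (hi₁.indicator hB).integrableOn (hi₂.indicator hB).integrableOn
      have rhs : ∫ ω in s, (μ[h₁ + h₂|m']) ω * w ω ∂μ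
          = ∫ ω in s, (μ[h₁|m']) ω * w ω ∂μ + ∫ ω in s, (μ[h₂|m']) ω * w ω ∂μ := by
        rw [← integral_add (hmulint hi₁).integrableOn (hmulint hi₂).integrableOn]
        refine integral_congr_ae (ae_restrict_of_ae ?_)
        filter_upwards [condExp_add (m := m') hi₁ hi₂] with ω hω
        rw [hω, Pi.add_apply]; ring
      rw [lhs, rhs, hQ₁ s hs, hQ₂ s hs]
    · -- closedness
      have hint : ∀ u : Lp ℝ 1 μ, Integrable (fun ω => (u : Ω → ℝ) ω * w ω) μ := fun u =>
        ((L1.integrable_coeFn u).bdd_mul hw_sm.aestronglyMeasurable hw_bdd).congr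
          (Filter.Eventually.of_forall fun ω => mul_comm _ _)
      have hφcont : ∀ s : Set Ω, Continuous fun u : Lp ℝ 1 μ => ∫ ω in s, u ω * w ω ∂μ := by
        intro s
        let φ : Lp ℝ 1 μ →ₗ[ℝ] ℝ :=
          { toFun := fun u => ∫ ω in s, u ω * w ω ∂μ
            map_add' := by
              intro u v
              rw [← integral_add (hint u).integrableOn (hint v).integrableOn]
              refine integral_congr_ae (ae_restrict_of_ae ?_)
              filter_upwards [Lp.coeFn_add u v] with ω hω
              rw [hω, Pi.add_apply]; ring
            map_smul' := by
              intro c u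
              simp only [RingHom.id_apply, smul_eq_mul]
              rw [← integral_const_mul]
              refine integral_congr_ae (ae_restrict_of_ae ?_)
              filter_upwards [Lp.coeFn_smul c u] with ω hω
              rw [hω, Pi.smul_apply, smul_eq_mul]; ring }
        have hφbound : ∀ u : Lp ℝ 1 μ, ‖φ u‖ ≤ 1 * ‖u‖ := by
          intro u
          have h1 : ‖φ u‖ ≤ ∫ ω in s, ‖(u : Ω → ℝ) ω * w ω‖ ∂μ :=
            norm_integral_le_integral_norm _
          have h2 : ∫ ω in s, ‖(u : Ω → ℝ) ω * w ω‖ ∂μ ≤ ∫ ω in s, ‖(u : Ω → ℝ) ω‖ ∂μ := by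
            refine integral_mono_of_nonneg
              (Filter.Eventually.of_forall fun ω => norm_nonneg _)
              (L1.integrable_coeFn u).norm.integrableOn ?_
            refine ae_restrict_of_ae ?_
            filter_upwards [hw_bdd] with ω hω
            rw [norm_mul]
            calc ‖(u : Ω → ℝ) ω‖ * ‖w ω‖ ≤ ‖(u : Ω → ℝ) ω‖ * 1 :=
              mul_le_mul_of_nonneg_left hω (norm_nonneg _)
            _ = ‖(u : Ω → ℝ) ω‖ := mul_one _
          have h3 : ∫ ω in s, ‖(u : Ω → ℝ) ω‖ ∂μ ≤ ∫ ω, ‖(u : Ω → ℝ) ω‖ ∂μ :=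
            integral_mono_measure Measure.restrict_le_self
              (Filter.Eventually.of_forall fun ω => norm_nonneg _)
              (L1.integrable_coeFn u).norm
          rw [one_mul, L1.norm_eq_integral_norm]
          calc ‖φ u‖ ≤ _ := h1
          _ ≤ _ := h2
          _ ≤ _ := h3
        exact (φ.mkContinuous 1 hφbound).continuous
      have hQiff : ∀ u : Lp ℝ 1 μ, ∀ s : Set Ω,
          (∫ ω in s, B.indicator (u : Ω → ℝ) ω ∂μ
              = ∫ ω in s, (μ[(u : Ω → ℝ)|m']) ω * w ω ∂μ)
            ↔ (∫ ω in s ∩ B, (u : Ω → ℝ) ω ∂μ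
                = ∫ ω in s, (condExpL1CLM ℝ hm' μ u : Ω → ℝ) ω * w ω ∂μ) := by
        intro u s
        rw [setIntegral_indicator hB]
        have hce : μ[(u : Ω → ℝ)|m'] =ᵐ[μ] (condExpL1CLM ℝ hm' μ u : Ω → ℝ) := by
          have := condExp_ae_eq_condExpL1CLM hm' (L1.integrable_coeFn u)
          rwa [Integrable.toL1_coeFn] at this
        have heq : ∫ ω in s, (μ[(u : Ω → ℝ)|m']) ω * w ω ∂μ
            = ∫ ω in s, (condExpL1CLM ℝ hm' μ u : Ω → ℝ) ω * w ω ∂μ := by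
          refine integral_congr_ae (ae_restrict_of_ae ?_)
          filter_upwards [hce] with ω hω
          rw [hω]
        rw [heq]
      have hseteq : {u : lpMeas ℝ ℝ (MeasurableSpace.comap f inferInstance) 1 μ |
            ∀ s, MeasurableSet[m'] s →
              ∫ ω in s, B.indicator (u : Ω → ℝ) ω ∂μ
                = ∫ ω in s, (μ[(u : Ω → ℝ)|m']) ω * w ω ∂μ}
          = ⋂ (s : Set Ω), {u : lpMeas ℝ ℝ (MeasurableSpace.comap f inferInstance) 1 μ |
              MeasurableSet[m'] s →
              ∫ ω in s ∩ B, ((u : Lp ℝ 1 μ) : Ω → ℝ) ω ∂μ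
                = ∫ ω in s, (condExpL1CLM ℝ hm' μ (u : Lp ℝ 1 μ) : Ω → ℝ) ω * w ω ∂μ} := by
        ext u
        simp only [Set.mem_setOf_eq, Set.mem_iInter]
        exact forall_congr' fun s => imp_congr_right fun _ => hQiff _ s
      rw [hseteq]
      refine isClosed_iInter fun s => ?_
      by_cases hs : MeasurableSet[m'] s
      · have heq2 : {u : lpMeas ℝ ℝ (MeasurableSpace.comap f inferInstance) 1 μ |
            MeasurableSet[m'] s →
              ∫ ω in s ∩ B, ((u : Lp ℝ 1 μ) : Ω → ℝ) ω ∂μ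
                = ∫ ω in s, (condExpL1CLM ℝ hm' μ (u : Lp ℝ 1 μ) : Ω → ℝ) ω * w ω ∂μ}
            = {u : lpMeas ℝ ℝ (MeasurableSpace.comap f inferInstance) 1 μ |
              ∫ ω in s ∩ B, ((u : Lp ℝ 1 μ) : Ω → ℝ) ω ∂μ
                = ∫ ω in s, (condExpL1CLM ℝ hm' μ (u : Lp ℝ 1 μ) : Ω → ℝ) ω * w ω ∂μ} := by
          ext u; simp [hs]
        rw [heq2]
        refine isClosed_eq ?_ ?_
        · exact (continuous_setIntegral (s ∩ B)).comp continuous_subtype_val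
        · exact ((hφcont s).comp (condExpL1CLM ℝ hm' μ).continuous).comp
            continuous_subtype_val
      · have heq2 : {u : lpMeas ℝ ℝ (MeasurableSpace.comap f inferInstance) 1 μ |
            MeasurableSet[m'] s →
              ∫ ω in s ∩ B, ((u : Lp ℝ 1 μ) : Ω → ℝ) ω ∂μ
                = ∫ ω in s, (condExpL1CLM ℝ hm' μ (u : Lp ℝ 1 μ) : Ω → ℝ) ω * w ω ∂μ}
            = Set.univ := by
          ext u; simp [hs]
        rw [heq2]; exact isClosed_univ
    · -- a.e. congruence
      intro h₁ h₂ hh hL hQ s hs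
      have e1 : ∫ ω in s, B.indicator h₂ ω ∂μ = ∫ ω in s, B.indicator h₁ ω ∂μ := by
        refine integral_congr_ae (ae_restrict_of_ae ?_)
        filter_upwards [hh] with ω hω
        by_cases h : ω ∈ B <;> simp [h, hω]
      have e2 : ∫ ω in s, (μ[h₂|m']) ω * w ω ∂μ = ∫ ω in s, (μ[h₁|m']) ω * w ω ∂μ := by
        refine integral_congr_ae (ae_restrict_of_ae ?_)
        filter_upwards [condExp_congr_ae (m := m') hh] with ω hω
        rw [hω]
      rw [e1, e2]
      exact hQ s hs
  have hfmeas : Measurable[MeasurableSpace.comap f inferInstance] f := fun t ht =>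
    MeasurableSpace.measurableSet_comap.mpr ⟨t, ht, rfl⟩
  exact key (memLp_one_iff_integrable.mpr hfint)
    hfmeas.stronglyMeasurable.aestronglyMeasurable s hs

/-- From conditional independence, conditioning on the larger σ-algebra `m' ⊔ σ(Z)` gives the
same conditional expectation as conditioning on `m'`. -/
lemma lemA {γ : Type*} [MeasurableSpace γ] {m' : MeasurableSpace Ω} (hm' : m' ≤ mΩ)
    {f : Ω → ℝ} (hf : Measurable[mΩ] f) (hfint : Integrable f μ)
    {Z : Ω → γ} (hZ : Measurable[mΩ] Z)
    (hCI : CondIndepFun m' hm' f Z μ) :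
    μ[f|m' ⊔ MeasurableSpace.comap Z inferInstance] =ᵐ[μ] μ[f|m'] := by
  set mZ := MeasurableSpace.comap Z inferInstance with hmZ_def
  set m₂ := m' ⊔ mZ with hm₂_def
  have hm₂ : m₂ ≤ mΩ := sup_le hm' hZ.comap_le
  set π : Set (Set Ω) :=
    {A | ∃ s t, MeasurableSet[m'] s ∧ MeasurableSet[mZ] t ∧ A = s ∩ t} with hπ_def
  letI : MeasurableSpace Ω := mΩ
  have hgen : m₂ = MeasurableSpace.generateFrom π := by
    refine le_antisymm ?_ ?_
    · refine sup_le ?_ ?_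
      · intro s hs
        exact MeasurableSpace.measurableSet_generateFrom
          ⟨s, Set.univ, hs, @MeasurableSet.univ _ mZ, (Set.inter_univ s).symm⟩
      · intro t ht
        exact MeasurableSpace.measurableSet_generateFrom
          ⟨Set.univ, t, @MeasurableSet.univ _ m', ht, (Set.univ_inter t).symm⟩
    · refine MeasurableSpace.generateFrom_le ?_
      rintro A ⟨s, t, hs, ht, rfl⟩
      exact ((le_sup_left : m' ≤ m₂) s hs).inter ((le_sup_right : mZ ≤ m₂) t ht)
  have hpi : IsPiSystem π := by
    rintro A₁ ⟨s₁, t₁, hs₁, ht₁, rfl⟩ A₂ ⟨s₂, t₂, hs₂, ht₂, rfl⟩ -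
    refine ⟨s₁ ∩ s₂, t₁ ∩ t₂, hs₁.inter hs₂, ht₁.inter ht₂, ?_⟩
    ext ω; simp only [Set.mem_inter_iff]; tauto
  have hkey : ∀ A, MeasurableSet[m₂] A →
      ∫ ω in A, (μ[f|m']) ω ∂μ = ∫ ω in A, f ω ∂μ := by
    intro A hA
    refine MeasurableSpace.induction_on_inter (m := m₂) (C := fun A _ =>
      ∫ ω in A, (μ[f|m']) ω ∂μ = ∫ ω in A, f ω ∂μ) hgen hpi ?_ ?_ ?_ ?_ A hA
    · simp
    · rintro A ⟨s, t, hs, ⟨t', ht', rfl⟩, rfl⟩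
      -- A = s ∩ Z ⁻¹' t'
      set B := Z ⁻¹' t' with hB_def
      have hB : MeasurableSet[mΩ] B := hZ ht'
      have hQf := lemP hm' hf hfint hZ hCI ht' s hs
      have hc_sm : StronglyMeasurable[m'] (μ[f|m']) := stronglyMeasurable_condExp
      have hBint : Integrable (B.indicator (fun _ => (1 : ℝ))) μ :=
        (integrable_const (1 : ℝ)).indicator hB
      have hbnd : ∀ᵐ ω ∂μ, ‖B.indicator (fun _ => (1 : ℝ)) ω‖ ≤ 1 := by
        filter_upwards with ω
        by_cases h : ω ∈ B <;> simp [h]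
      have hprodint :
          Integrable (fun ω => (μ[f|m']) ω * B.indicator (fun _ => (1 : ℝ)) ω) μ :=
        (integrable_condExp.bdd_mul
          (stronglyMeasurable_const.indicator hB).aestronglyMeasurable hbnd).congr
          (Filter.Eventually.of_forall fun ω => mul_comm _ _)
      have hQc : ∫ ω in s, B.indicator (μ[f|m']) ω ∂μ
          = ∫ ω in s, (μ[f|m']) ω * (μ⟦B|m'⟧) ω ∂μ := by
        have e1 : ∫ ω in s, B.indicator (μ[f|m']) ω ∂μ
            = ∫ ω in s, (μ[f|m']) ω * B.indicator (fun _ => (1 : ℝ)) ω ∂μ := by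
          refine integral_congr_ae (ae_restrict_of_ae ?_)
          filter_upwards with ω
          by_cases h : ω ∈ B <;> simp [h]
        have e2 : μ[fun ω => (μ[f|m']) ω * B.indicator (fun _ => (1 : ℝ)) ω|m']
            =ᵐ[μ] fun ω => (μ[f|m']) ω * (μ⟦B|m'⟧) ω := by
          have hmul := condExp_mul_of_stronglyMeasurable_left (m := m') (μ := μ) hc_sm
            (g := B.indicator (fun _ => (1 : ℝ))) hprodint hBint
          filter_upwards [hmul] with ω hω
          exact hω
        rw [e1, ← setIntegral_condExp hm' hprodint hs]
        exact integral_congr_ae (ae_restrict_of_ae e2)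
      calc ∫ ω in s ∩ B, (μ[f|m']) ω ∂μ
          = ∫ ω in s, B.indicator (μ[f|m']) ω ∂μ := (setIntegral_indicator hB).symm
        _ = ∫ ω in s, (μ[f|m']) ω * (μ⟦B|m'⟧) ω ∂μ := hQc
        _ = ∫ ω in s, B.indicator f ω ∂μ := hQf.symm
        _ = ∫ ω in s ∩ B, f ω ∂μ := setIntegral_indicator hB
    · intro A hA hind
      have hAmΩ : MeasurableSet[mΩ] A := hm₂ A hA
      have h1 := integral_add_compl hAmΩ (integrable_condExp (f := f) (m := m') (μ := μ))
      have h2 := integral_add_compl hAmΩ hfint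
      have h3 : ∫ ω, (μ[f|m']) ω ∂μ = ∫ ω, f ω ∂μ := integral_condExp hm'
      linarith
    · intro g hdisj hmeas hind
      rw [integral_iUnion (fun i => hm₂ _ (hmeas i)) hdisj
        integrable_condExp.integrableOn,
        integral_iUnion (fun i => hm₂ _ (hmeas i)) hdisj hfint.integrableOn]
      exact tsum_congr hind
  refine (ae_eq_condExp_of_forall_setIntegral_eq hm₂ hfint
    (fun s _ _ => integrable_condExp.integrableOn)
    (fun s hs _ => hkey s hs) ?_).symm
  exact (stronglyMeasurable_condExp.mono (le_sup_left : m' ≤ m₂)).aestronglyMeasurable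

/-- Disintegration step: pulling a (possibly non-measurable) function of `W` out of a
conditional expectation given `σ(W)`. -/
lemma lemB [Nonempty Ω] {β : Type*} [MeasurableSpace β] [StandardBorelSpace β] {q : ℕ}
    {W : Ω → β} (hW : Measurable W)
    (hdiag : MeasurableSet {x : β × β | x.1 = x.2})
    {c : Ω → ℝ} (hc : StronglyMeasurable c) (hcint : Integrable c μ)
    {G : Ω → Fin q → ℝ} (hG : Measurable G) (hGint : Integrable G μ)
    (v₀ : β → Fin q → ℝ)
    (hc_eq : c =ᵐ[μ] fun ω => v₀ (W ω) ⬝ᵥ G ω) :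
    μ[c|MeasurableSpace.comap W inferInstance] =ᵐ[μ]
      fun ω => v₀ (W ω) ⬝ᵥ (μ[G|MeasurableSpace.comap W inferInstance]) ω := by
  set ρ := condDistrib id W μ with hρ_def
  have h1 : μ[c|MeasurableSpace.comap W inferInstance]
      =ᵐ[μ] fun ω => ∫ ω', c ω' ∂(ρ (W ω)) :=
    condExp_ae_eq_integral_condDistrib (Y := id) hW aemeasurable_id hc hcint
  have h2 : μ[G|MeasurableSpace.comap W inferInstance]
      =ᵐ[μ] fun ω => ∫ ω', G ω' ∂(ρ (W ω)) :=
    condExp_ae_eq_integral_condDistrib (Y := id) hW aemeasurable_id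
      hG.stronglyMeasurable hGint
  have h3 : ∀ᵐ ω ∂μ, Integrable c (ρ (W ω)) := by
    have h := (hcint.comp_snd_map_prodMk W).condDistrib_ae
      (Y := id) hW.aemeasurable aemeasurable_id
    exact h
  have h4 : ∀ᵐ ω ∂μ, Integrable G (ρ (W ω)) := by
    have h := (hGint.comp_snd_map_prodMk W).condDistrib_ae
      (Y := id) hW.aemeasurable aemeasurable_id
    exact h
  obtain ⟨N, hNsub, hNmeas, hNnull⟩ :=
    exists_measurable_superset_of_null (ae_iff.mp hc_eq)
  have h5 : ∀ᵐ ω ∂μ, ρ (W ω) N = 0 := by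
    have hez : (fun ω => (ρ (W ω) N).toReal)
        =ᵐ[μ] μ⟦id ⁻¹' N|MeasurableSpace.comap W inferInstance⟧ :=
      condDistrib_ae_eq_condExp hW measurable_id hNmeas
    have hzero : μ⟦id ⁻¹' N|MeasurableSpace.comap W inferInstance⟧
        =ᵐ[μ] (fun _ => (0 : ℝ)) := by
      have hind : (id ⁻¹' N : Set Ω).indicator (fun _ => (1 : ℝ))
          =ᵐ[μ] (fun _ => (0 : ℝ)) := by
        rw [Set.preimage_id]
        filter_upwards [measure_eq_zero_iff_ae_notMem.mp hNnull] with ω hω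
        simp [hω]
      refine (condExp_congr_ae hind).trans ?_
      rw [show (fun _ : Ω => (0 : ℝ)) = (0 : Ω → ℝ) from rfl, condExp_zero]
    filter_upwards [hez, hzero] with ω h h0
    have htr : (ρ (W ω) N).toReal = 0 := by rw [h, h0]
    exact ((ENNReal.toReal_eq_zero_iff _).mp htr).resolve_right (measure_ne_top _ _)
  have h6 : ∀ᵐ ω ∂μ, ∀ᵐ ω' ∂(ρ (W ω)), W ω' = W ω := by
    haveI : IsProbabilityMeasure (μ.map W) := Measure.isProbabilityMeasure_map hW.aemeasurable
    haveI : IsProbabilityMeasure (μ.map (fun ω => (W ω, ω))) :=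
      Measure.isProbabilityMeasure_map (hW.prodMk measurable_id).aemeasurable
    have hmeq : μ.map W ⊗ₘ ρ = μ.map (fun ω => (W ω, ω)) := by
      have hd : ρ = (μ.map (fun ω => (W ω, ω))).condKernel := by
        rw [hρ_def, condDistrib]
        rfl
      rw [hd, ← Measure.fst_map_prodMk₀ (X := W) (Y := fun ω => ω) aemeasurable_id]
      exact Measure.disintegrate _ _
    have hS : MeasurableSet {x : β × Ω | W x.2 = x.1} := by
      have hrw : {x : β × Ω | W x.2 = x.1}
          = (fun x : β × Ω => (W x.2, x.1)) ⁻¹' {y : β × β | y.1 = y.2} := rfl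
      rw [hrw]
      exact ((hW.comp measurable_snd).prodMk measurable_fst) hdiag
    have hae : ∀ᵐ x ∂(μ.map W ⊗ₘ ρ), W x.2 = x.1 := by
      rw [hmeq, ae_map_iff (hW.prodMk measurable_id').aemeasurable hS]
      exact Filter.Eventually.of_forall fun ω => rfl
    exact ae_of_ae_map hW.aemeasurable (Measure.ae_ae_of_ae_compProd hae)
  refine h1.trans ?_
  filter_upwards [h2, h3, h4, h5, h6] with ω hGω hcInt hGInt hN5 hW6
  have haefin : ∀ᵐ ω' ∂(ρ (W ω)), c ω' = v₀ (W ω) ⬝ᵥ G ω' := by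
    have hnm : ∀ᵐ ω' ∂(ρ (W ω)), ω' ∉ N := measure_eq_zero_iff_ae_notMem.mp hN5
    filter_upwards [hnm, hW6] with ω' h1' h2'
    have hmem : c ω' = v₀ (W ω') ⬝ᵥ G ω' := by
      by_contra hcon
      exact h1' (hNsub hcon)
    rw [hmem, h2']
  rw [integral_congr_ae haefin, integral_const_dotProduct _ hGInt, hGω]

end Aux

/-- Suppose `E[Y(a) | U, X] = τ(a, X)' g(U, X)` for each `a`, and `Y(a) ⫫ Z | (U, X)`.
Then `E[Y(a) | Z, X] = τ(a, X)' E[g(U, X) | Z, X]` almost surely, and hence the CATE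
satisfies `E[Y(a₁) − Y(a₀) | Z, X] = (τ(a₁, X) − τ(a₀, X))' E[g(U, X) | Z, X]`. -/
theorem stmt9 {Ω : Type*} [mΩ : MeasurableSpace Ω] [StandardBorelSpace Ω] [Nonempty Ω]
    (μ : Measure Ω) [IsProbabilityMeasure μ]
    {l k p q : ℕ} (X : Ω → Fin l → ℝ) (U : Ω → Fin k → ℝ) (Z : Ω → Fin p → ℝ)
    (Ypot : ℝ → Ω → ℝ)
    (hX : Measurable X) (hU : Measurable U) (hZ : Measurable Z)
    (hYpot : ∀ a, Measurable (Ypot a))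
    (g : (Fin k → ℝ) → (Fin l → ℝ) → Fin q → ℝ) (τ : ℝ → (Fin l → ℝ) → Fin q → ℝ)
    (hg : Measurable (fun ux : (Fin k → ℝ) × (Fin l → ℝ) => g ux.1 ux.2))
    (hUXle : MeasurableSpace.comap (fun ω => (U ω, X ω)) inferInstance ≤ mΩ)
    -- the working outcome model `E[Y(a) | U, X] = τ(a, X)' g(U, X)`
    (hmodel : ∀ a : ℝ,
      μ[Ypot a | MeasurableSpace.comap (fun ω => (U ω, X ω)) inferInstance]
        =ᵐ[μ] fun ω => τ a (X ω) ⬝ᵥ g (U ω) (X ω))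
    -- conditional independence `Y(a) ⫫ Z | (U, X)`
    (hCIZ : ∀ a : ℝ, CondIndepFun
      (MeasurableSpace.comap (fun ω => (U ω, X ω)) inferInstance) hUXle (Ypot a) Z μ)
    -- integrability
    (hYpotint : ∀ a, Integrable (Ypot a) μ)
    (hgint : Integrable (fun ω => g (U ω) (X ω)) μ)
    (a₀ a₁ : ℝ) :
    (∀ a : ℝ,
      μ[Ypot a | MeasurableSpace.comap (fun ω => (Z ω, X ω)) inferInstance]
        =ᵐ[μ] fun ω => τ a (X ω) ⬝ᵥ
          (μ[(fun ω' => g (U ω') (X ω')) |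
            MeasurableSpace.comap (fun ω' => (Z ω', X ω')) inferInstance]) ω) ∧
    (μ[(fun ω => Ypot a₁ ω - Ypot a₀ ω) |
        MeasurableSpace.comap (fun ω => (Z ω, X ω)) inferInstance]
      =ᵐ[μ] fun ω => (τ a₁ (X ω) - τ a₀ (X ω)) ⬝ᵥ
        (μ[(fun ω' => g (U ω') (X ω')) |
          MeasurableSpace.comap (fun ω' => (Z ω', X ω')) inferInstance]) ω) := by
  classical
  set W : Ω → (Fin p → ℝ) × (Fin l → ℝ) := fun ω => (Z ω, X ω) with hW_def
  have hW : Measurable W := hZ.prodMk hX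
  have hG : Measurable (fun ω => g (U ω) (X ω)) := hg.comp (hU.prodMk hX)
  have key : ∀ a : ℝ,
      μ[Ypot a|MeasurableSpace.comap W inferInstance] =ᵐ[μ] fun ω => τ a (X ω) ⬝ᵥ
        (μ[(fun ω' => g (U ω') (X ω'))|MeasurableSpace.comap W inferInstance]) ω := by
    intro a
    have hm₂le : MeasurableSpace.comap (fun ω => (U ω, X ω)) inferInstance
        ⊔ MeasurableSpace.comap Z inferInstance ≤ mΩ :=
      sup_le hUXle hZ.comap_le
    have hXm' : Measurable[MeasurableSpace.comap (fun ω => (U ω, X ω)) inferInstance] X := by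
      have h0 : Measurable[MeasurableSpace.comap (fun ω => (U ω, X ω)) inferInstance]
          (fun ω => (U ω, X ω)) := fun t ht =>
        MeasurableSpace.measurableSet_comap.mpr ⟨t, ht, rfl⟩
      exact measurable_snd.comp h0
    have hZm : Measurable[MeasurableSpace.comap Z inferInstance] Z := fun t ht =>
      MeasurableSpace.measurableSet_comap.mpr ⟨t, ht, rfl⟩
    have hWle : MeasurableSpace.comap W inferInstance
        ≤ MeasurableSpace.comap (fun ω => (U ω, X ω)) inferInstance
          ⊔ MeasurableSpace.comap Z inferInstance := by
      refine Measurable.comap_le (Measurable.prodMk ?_ ?_)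
      · exact hZm.mono le_sup_right le_rfl
      · exact hXm'.mono le_sup_left le_rfl
    have hA := lemA hUXle (hYpot a) (hYpotint a) hZ (hCIZ a)
    have htower : μ[Ypot a|MeasurableSpace.comap W inferInstance]
        =ᵐ[μ] μ[μ[Ypot a|MeasurableSpace.comap (fun ω => (U ω, X ω)) inferInstance]|
          MeasurableSpace.comap W inferInstance] := by
      have h1 := condExp_condExp_of_le (μ := μ) (f := Ypot a) hWle hm₂le
      exact h1.symm.trans (condExp_congr_ae hA)
    have hdiag : MeasurableSet
        {x : ((Fin p → ℝ) × (Fin l → ℝ)) × ((Fin p → ℝ) × (Fin l → ℝ)) | x.1 = x.2} :=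
      measurableSet_eq_fun measurable_fst measurable_snd
    have hB := lemB (μ := μ) hW hdiag
      ((stronglyMeasurable_condExp
        (m := MeasurableSpace.comap (fun ω => (U ω, X ω)) inferInstance)).mono hUXle)
      integrable_condExp hG hgint (fun wz => τ a wz.2) (hmodel a)
    exact htower.trans hB
  refine ⟨key, ?_⟩
  have hsubeq : (fun ω => Ypot a₁ ω - Ypot a₀ ω) = Ypot a₁ - Ypot a₀ := rfl
  rw [hsubeq]
  have hsub := condExp_sub (μ := μ) (m := MeasurableSpace.comap W inferInstance)
    (hYpotint a₁) (hYpotint a₀)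
  filter_upwards [hsub, key a₁, key a₀] with ω h1 h2 h3
  rw [h1, Pi.sub_apply, h2, h3, sub_dotProduct]
end

section
/- Let Y = ε_Y + g₀(U) + A g₁(U) with A ∈ {0,1}, E[ε_Y | U, Z, A] = 0, and potential outcomes Y(a) = ε_Y + g₀(U) + a g₁(U). Then the difference E[Y | Z, A=1] − E[Y | Z, A=0] equals E[g₁(U) | Z] plus the bias term E[h(U,Z) | Z, A=1] − E[h(U,Z) | Z, A=0], where h(U, Z) = g₀(U) + P(A = 0 | Z) g₁(U). -/
open Matrix MeasureTheory ProbabilityTheory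

set_option maxHeartbeats 1000000

section Aux

variable {Ω : Type*} {m mΩ : MeasurableSpace Ω} {μ : Measure Ω} {s : Set Ω}

lemma aux_cond_def (μ : Measure Ω) (s : Set Ω) : μ[|s] = (μ s)⁻¹ • μ.restrict s := rfl

lemma aux_integrable_cond {f : Ω → ℝ} (hf : Integrable f μ) (hμs : μ s ≠ 0) :
    Integrable f (μ[|s]) := by
  rw [aux_cond_def]
  exact (hf.restrict).smul_measure (ENNReal.inv_ne_top.mpr hμs)

lemma aux_setIntegral_cond (hs : MeasurableSet s) {S : Set Ω} (hS : MeasurableSet S) (f : Ω → ℝ) :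
    ∫ x in S, f x ∂(μ[|s]) = (μ s).toReal⁻¹ • ∫ x in S ∩ s, f x ∂μ := by
  rw [aux_cond_def, Measure.restrict_smul, integral_smul_measure, ENNReal.toReal_inv,
    Measure.restrict_restrict hS]

lemma aux_setIntegral_inter (hs : MeasurableSet s) {S : Set Ω} (f : Ω → ℝ) :
    ∫ x in S, s.indicator f x ∂μ = ∫ x in S ∩ s, f x ∂μ := by
  rw [integral_indicator hs, Measure.restrict_restrict hs, Set.inter_comm]

lemma aux_condexp_cond (hm : m ≤ mΩ) [IsProbabilityMeasure μ] (hs : MeasurableSet s)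
    (hμs : μ s ≠ 0) {f G : Ω → ℝ} (hf : Integrable f μ) (hG : StronglyMeasurable[m] G)
    (hGint : Integrable G μ)
    (heq : ∀ S : Set Ω, MeasurableSet[m] S → ∫ x in S ∩ s, G x ∂μ = ∫ x in S ∩ s, f x ∂μ) :
    G =ᵐ[μ[|s]] (μ[|s])[f|m] := by
  haveI : IsProbabilityMeasure (μ[|s]) := cond_isProbabilityMeasure hμs
  refine ae_eq_condExp_of_forall_setIntegral_eq hm (aux_integrable_cond hf hμs) ?_ ?_
    hG.aestronglyMeasurable
  · exact fun S hS _ => (aux_integrable_cond hGint hμs).integrableOn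
  · intro S hS _
    rw [aux_setIntegral_cond hs (hm S hS) G, aux_setIntegral_cond hs (hm S hS) f, heq S hS]

lemma aux_transfer (hm : m ≤ mΩ) [IsProbabilityMeasure μ] (hs : MeasurableSet s) (hμs : μ s ≠ 0)
    {e : Ω → ℝ} (he : ∀ ω, e ω = s.indicator (fun _ => (1:ℝ)) ω) (heint : Integrable e μ)
    (hpos : ∀ᵐ ω ∂μ, 0 < (μ[e|m]) ω)
    {f g : Ω → ℝ} (hf : StronglyMeasurable[m] f) (hg : StronglyMeasurable[m] g)
    (hfg : f =ᵐ[μ[|s]] g) : f =ᵐ[μ] g := by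
  set T := {ω | ¬ f ω = g ω} with hT_def
  have hTm : MeasurableSet[m] T := (measurableSet_eq_fun hf.measurable hg.measurable).compl
  have hT : MeasurableSet[mΩ] T := hm T hTm
  have h1 : (μ[|s]) T = 0 := ae_iff.mp hfg
  rw [cond_apply hs] at h1
  have h2 : μ (s ∩ T) = 0 := by
    rcases mul_eq_zero.mp h1 with h | h
    · exact absurd h (ENNReal.inv_ne_zero.mpr (measure_ne_top μ s))
    · exact h
  have h3 : ∫ x in T, e x ∂μ = 0 := by
    have : ∫ x in T, e x ∂μ = ∫ x in T, s.indicator (fun _ => (1:ℝ)) x ∂μ :=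
      integral_congr_ae (Filter.Eventually.of_forall fun ω => he ω)
    rw [this, aux_setIntegral_inter hs, Set.inter_comm, setIntegral_const]
    simp [h2, Measure.real]
  have h4 : ∫ x in T, (μ[e|m]) x ∂μ = 0 := by
    rw [setIntegral_condExp hm heint hTm, h3]
  have h5 : μ[e|m] =ᵐ[μ.restrict T] 0 := by
    refine (integral_eq_zero_iff_of_nonneg_ae ?_ integrable_condExp.restrict).mp h4
    exact ae_restrict_of_ae (hpos.mono fun ω h => le_of_lt h)
  have h6 : ∀ᵐ ω ∂(μ.restrict T), False := by
    filter_upwards [h5, ae_restrict_of_ae hpos] with ω h1' h2'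
    rw [h1'] at h2'
    exact lt_irrefl 0 h2'
  have h7 : μ T = 0 := by
    have := ae_iff.mp h6
    simpa [Measure.restrict_apply_univ] using this
  exact ae_iff.mpr h7

lemma aux_pullout (hm : m ≤ mΩ) [IsProbabilityMeasure μ] {q w : Ω → ℝ}
    (hq : StronglyMeasurable[m] q)
    (hqw : Integrable (fun ω => q ω * w ω) μ) (hw : Integrable w μ)
    {S : Set Ω} (hS : MeasurableSet[m] S) :
    ∫ x in S, q x * w x ∂μ = ∫ x in S, q x * (μ[w|m]) x ∂μ := by
  calc ∫ x in S, q x * w x ∂μ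
      = ∫ x in S, (μ[fun ω => q ω * w ω|m]) x ∂μ := (setIntegral_condExp hm hqw hS).symm
    _ = ∫ x in S, q x * (μ[w|m]) x ∂μ := by
        refine integral_congr_ae (ae_restrict_of_ae ?_)
        exact condExp_mul_of_stronglyMeasurable_left hq hqw hw

end Aux
lemma main_aux {Ω : Type*} {m : MeasurableSpace Ω} [mΩ : MeasurableSpace Ω] (hm : m ≤ mΩ)
    (μ : Measure Ω) [IsProbabilityMeasure μ]
    (A εY : Ω → ℝ) (hA : Measurable A)
    (gU₀ gU₁ : Ω → ℝ) (hgU₁ : Measurable gU₁)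
    (hbin : ∀ ω, A ω = 0 ∨ A ω = 1)
    (Y : Ω → ℝ) (hY : ∀ ω, Y ω = εY ω + gU₀ ω + A ω * gU₁ ω)
    (hpos : ∀ᵐ ω ∂μ, 0 < (μ[(fun ω' => if A ω' = 1 then (1:ℝ) else 0)|m]) ω ∧
        (μ[(fun ω' => if A ω' = 1 then (1:ℝ) else 0)|m]) ω < 1)
    (hint : Integrable Y μ) (hg₀int : Integrable gU₀ μ) (hg₁int : Integrable gU₁ μ)
    (hε1 : ∀ S : Set Ω, MeasurableSet[m] S → ∫ x in S ∩ {ω' | A ω' = 1}, εY x ∂μ = 0)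
    (hε0 : ∀ S : Set Ω, MeasurableSet[m] S → ∫ x in S ∩ {ω' | A ω' = 0}, εY x ∂μ = 0) :
    ∀ᵐ ω ∂μ,
      ((μ[|{ω' | A ω' = 1}])[Y|m]) ω - ((μ[|{ω' | A ω' = 0}])[Y|m]) ω =
      (μ[gU₁|m]) ω +
        (((μ[|{ω' | A ω' = 1}])[(fun ω' => gU₀ ω' +
            (μ[(fun ω'' => if A ω'' = 0 then (1:ℝ) else 0)|m]) ω' * gU₁ ω')|m]) ω -
          ((μ[|{ω' | A ω' = 0}])[(fun ω' => gU₀ ω' +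
            (μ[(fun ω'' => if A ω'' = 0 then (1:ℝ) else 0)|m]) ω' * gU₁ ω')|m]) ω) := by
  classical
  set s1 : Set Ω := {ω' | A ω' = 1} with hs1_def
  set s0 : Set Ω := {ω' | A ω' = 0} with hs0_def
  have hms1 : MeasurableSet[mΩ] s1 := hA (measurableSet_singleton 1)
  have hms0 : MeasurableSet[mΩ] s0 := hA (measurableSet_singleton 0)
  set e1 : Ω → ℝ := fun ω' => if A ω' = 1 then 1 else 0 with he1_def
  set e0 : Ω → ℝ := fun ω'' => if A ω'' = 0 then 1 else 0 with he0_def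
  set p1 : Ω → ℝ := μ[e1|m] with hp1_def
  set p0 : Ω → ℝ := μ[e0|m] with hp0_def
  -- indicator identities
  have he1ind : ∀ ω, e1 ω = s1.indicator (fun _ => (1:ℝ)) ω := by
    intro ω
    by_cases h : A ω = 1 <;> simp [he1_def, hs1_def, Set.indicator_apply, h]
  have he0ind : ∀ ω, e0 ω = s0.indicator (fun _ => (1:ℝ)) ω := by
    intro ω
    by_cases h : A ω = 0 <;> simp [he0_def, hs0_def, Set.indicator_apply, h]
  have hindmul1 : ∀ (f : Ω → ℝ) ω, e1 ω * f ω = s1.indicator f ω := by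
    intro f ω
    by_cases h : A ω = 1 <;> simp [he1_def, hs1_def, Set.indicator_apply, h]
  have hindmul0 : ∀ (f : Ω → ℝ) ω, e0 ω * f ω = s0.indicator f ω := by
    intro f ω
    by_cases h : A ω = 0 <;> simp [he0_def, hs0_def, Set.indicator_apply, h]
  -- integrability of indicators
  have he1int : Integrable e1 μ :=
    ((integrable_const (1:ℝ)).indicator hms1).congr
      (Filter.Eventually.of_forall fun ω => (he1ind ω).symm)
  have he0int : Integrable e0 μ :=
    ((integrable_const (1:ℝ)).indicator hms0).congr
      (Filter.Eventually.of_forall fun ω => (he0ind ω).symm)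
  -- p0 = 1 - p1 a.e.
  have hp01 : p0 =ᵐ[μ] fun ω => 1 - p1 ω := by
    have h1 : e0 = (fun _ : Ω => (1:ℝ)) - e1 := by
      funext ω
      rcases hbin ω with h | h <;> simp [he0_def, he1_def, h] <;> norm_num
    rw [hp0_def, h1]
    refine (condExp_sub (integrable_const (1:ℝ)) he1int m).trans ?_
    rw [condExp_const hm (1:ℝ)]
    exact Filter.Eventually.of_forall fun ω => by simp [hp1_def]
  have hp0pos : ∀ᵐ ω ∂μ, 0 < p0 ω ∧ p0 ω < 1 := by
    filter_upwards [hpos, hp01] with ω h he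
    have he' : p0 ω = 1 - p1 ω := he
    rw [he']
    exact ⟨by linarith [h.2], by linarith [h.1]⟩
  -- the conditioning events have positive probability
  have hs1ne : μ s1 ≠ 0 := by
    intro h0
    have he1z : e1 =ᵐ[μ] 0 := by
      refine ae_iff.mpr (measure_mono_null (fun ω hω => ?_) h0)
      simp only [Set.mem_setOf_eq] at hω ⊢
      by_contra h
      exact hω (by simp only [he1_def, Pi.zero_apply]; exact if_neg h)
    have hz : p1 =ᵐ[μ] 0 := by
      calc p1 = μ[e1|m] := hp1_def
        _ =ᵐ[μ] μ[(0:Ω→ℝ)|m] := condExp_congr_ae he1z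
        _ = 0 := condExp_zero
    have hbad : ∀ᵐ ω ∂μ, False := by
      filter_upwards [hpos, hz] with ω h h2
      have h2' : p1 ω = 0 := h2
      rw [h2'] at h
      exact lt_irrefl 0 h.1
    simpa using ae_iff.mp hbad
  have hs0ne : μ s0 ≠ 0 := by
    intro h0
    have he0z : e0 =ᵐ[μ] 0 := by
      refine ae_iff.mpr (measure_mono_null (fun ω hω => ?_) h0)
      simp only [Set.mem_setOf_eq] at hω ⊢
      by_contra h
      exact hω (by simp only [he0_def, Pi.zero_apply]; exact if_neg h)
    have hz : p0 =ᵐ[μ] 0 := by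
      calc p0 = μ[e0|m] := hp0_def
        _ =ᵐ[μ] μ[(0:Ω→ℝ)|m] := condExp_congr_ae he0z
        _ = 0 := condExp_zero
    have hbad : ∀ᵐ ω ∂μ, False := by
      filter_upwards [hp0pos, hz] with ω h h2
      have h2' : p0 ω = 0 := h2
      rw [h2'] at h
      exact lt_irrefl 0 h.1
    simpa using ae_iff.mp hbad
  haveI hprob1 : IsProbabilityMeasure (μ[|s1]) := cond_isProbabilityMeasure hs1ne
  haveI hprob0 : IsProbabilityMeasure (μ[|s0]) := cond_isProbabilityMeasure hs0ne
  have hmem1 : ∀ᵐ ω ∂(μ[|s1]), A ω = 1 := by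
    rw [aux_cond_def]
    exact Measure.ae_smul_measure ((ae_restrict_mem hms1).mono fun ω h => h) _
  have hmem0 : ∀ᵐ ω ∂(μ[|s0]), A ω = 0 := by
    rw [aux_cond_def]
    exact Measure.ae_smul_measure ((ae_restrict_mem hms0).mono fun ω h => h) _
  -- measurability facts
  have hp0m : StronglyMeasurable[m] p0 := stronglyMeasurable_condExp
  have hp0meas : Measurable p0 := (hp0m.mono hm).measurable
  have he1meas : Measurable e1 := Measurable.ite hms1 measurable_const measurable_const
  have he0meas : Measurable e0 := Measurable.ite hms0 measurable_const measurable_const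
  -- norm bounds
  have bound_mul : ∀ c x : ℝ, |c| ≤ 1 → ‖c * x‖ ≤ ‖x‖ := fun c x h => by
    rw [Real.norm_eq_abs, Real.norm_eq_abs, abs_mul]
    nlinarith [abs_nonneg x, abs_nonneg c]
  have habsA : ∀ ω, |A ω| ≤ 1 := fun ω => by rcases hbin ω with h | h <;> rw [h] <;> norm_num
  have habse1 : ∀ ω, |e1 ω| ≤ 1 := fun ω => by
    by_cases h : A ω = 1 <;> simp [he1_def, h]
  have habse0 : ∀ ω, |e0 ω| ≤ 1 := fun ω => by
    by_cases h : A ω = 0 <;> simp [he0_def, h]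
  have habsp0 : ∀ᵐ ω ∂μ, |p0 ω| ≤ 1 := hp0pos.mono fun ω h => by
    rw [abs_le]; exact ⟨by linarith [h.1], by linarith [h.2]⟩
  have habs1p0 : ∀ᵐ ω ∂μ, |1 - p0 ω| ≤ 1 := hp0pos.mono fun ω h => by
    rw [abs_le]; exact ⟨by linarith [h.2], by linarith [h.1]⟩
  -- integrability facts
  have hAg1int : Integrable (fun ω => A ω * gU₁ ω) μ :=
    hg₁int.norm.mono' ((hA.mul hgU₁).aestronglyMeasurable)
      (Filter.Eventually.of_forall fun ω => bound_mul _ _ (habsA ω))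
  have hεint : Integrable εY μ := by
    have h1 : εY = fun ω => Y ω - (gU₀ ω + A ω * gU₁ ω) := by
      funext ω; rw [hY ω]; ring
    rw [h1]
    exact hint.sub (hg₀int.add hAg1int)
  have he1g1int : Integrable (fun ω => e1 ω * gU₁ ω) μ :=
    hg₁int.norm.mono' ((he1meas.mul hgU₁).aestronglyMeasurable)
      (Filter.Eventually.of_forall fun ω => bound_mul _ _ (habse1 ω))
  have he0g1int : Integrable (fun ω => e0 ω * gU₁ ω) μ :=
    hg₁int.norm.mono' ((he0meas.mul hgU₁).aestronglyMeasurable)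
      (Filter.Eventually.of_forall fun ω => bound_mul _ _ (habse0 ω))
  have hp0g1int : Integrable (fun ω => p0 ω * gU₁ ω) μ :=
    hg₁int.norm.mono' ((hp0meas.mul hgU₁).aestronglyMeasurable)
      (habsp0.mono fun ω h => bound_mul _ _ h)
  have hrint : Integrable (fun ω => (1 - p0 ω) * gU₁ ω) μ :=
    hg₁int.norm.mono' (((measurable_const.sub hp0meas).mul hgU₁).aestronglyMeasurable)
      (habs1p0.mono fun ω h => bound_mul _ _ h)
  have hhfunint : Integrable (fun ω' => gU₀ ω' + p0 ω' * gU₁ ω') μ := hg₀int.add hp0g1int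
  set hfun : Ω → ℝ := fun ω' => gU₀ ω' + p0 ω' * gU₁ ω' with hfun_def
  set G1 : Ω → ℝ := μ[fun ω => e1 ω * gU₁ ω|m] with hG1_def
  set G0 : Ω → ℝ := μ[fun ω => e0 ω * gU₁ ω|m] with hG0_def
  have hG1int : Integrable G1 μ := integrable_condExp
  have hG0int : Integrable G0 μ := integrable_condExp
  have hG1m : StronglyMeasurable[m] G1 := stronglyMeasurable_condExp
  have hG0m : StronglyMeasurable[m] G0 := stronglyMeasurable_condExp
  have hG1meas : Measurable G1 := (hG1m.mono hm).measurable
  have hG0meas : Measurable G0 := (hG0m.mono hm).measurable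
  have hG1e1int : Integrable (fun ω => G1 ω * e1 ω) μ :=
    hG1int.norm.mono' ((hG1meas.mul he1meas).aestronglyMeasurable)
      (Filter.Eventually.of_forall fun ω => by
        rw [mul_comm]; exact bound_mul _ _ (habse1 ω))
  have hG0e0int : Integrable (fun ω => G0 ω * e0 ω) μ :=
    hG0int.norm.mono' ((hG0meas.mul he0meas).aestronglyMeasurable)
      (Filter.Eventually.of_forall fun ω => by
        rw [mul_comm]; exact bound_mul _ _ (habse0 ω))
  have h1mp0e1g1int : Integrable (fun ω => (1 - p0 ω) * (e1 ω * gU₁ ω)) μ :=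
    hg₁int.norm.mono'
      (((measurable_const.sub hp0meas).mul (he1meas.mul hgU₁)).aestronglyMeasurable)
      (habs1p0.mono fun ω h =>
        le_trans (bound_mul _ _ h) (bound_mul _ _ (habse1 ω)))
  have hp0e0g1int : Integrable (fun ω => p0 ω * (e0 ω * gU₁ ω)) μ :=
    hg₁int.norm.mono'
      ((hp0meas.mul (he0meas.mul hgU₁)).aestronglyMeasurable)
      (habsp0.mono fun ω h =>
        le_trans (bound_mul _ _ h) (bound_mul _ _ (habse0 ω)))
  have hεcond1 : (0:Ω→ℝ) =ᵐ[μ[|s1]] (μ[|s1])[εY|m] := by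
    refine aux_condexp_cond hm hms1 hs1ne hεint stronglyMeasurable_zero
      (integrable_zero _ _ _) ?_
    intro S hS
    rw [hε1 S hS]
    simp
  have hεcond0 : (0:Ω→ℝ) =ᵐ[μ[|s0]] (μ[|s0])[εY|m] := by
    refine aux_condexp_cond hm hms0 hs0ne hεint stronglyMeasurable_zero
      (integrable_zero _ _ _) ?_
    intro S hS
    rw [hε0 S hS]
    simp
  -- set-integral identities for the main terms
  have heq1 : ∀ S : Set Ω, MeasurableSet[m] S →
      ∫ x in S ∩ s1, G1 x ∂μ = ∫ x in S ∩ s1, (1 - p0 x) * gU₁ x ∂μ := by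
    intro S hS
    have h1 : ∫ x in S ∩ s1, G1 x ∂μ = ∫ x in S, G1 x * p1 x ∂μ := by
      calc ∫ x in S ∩ s1, G1 x ∂μ
          = ∫ x in S, s1.indicator G1 x ∂μ := (aux_setIntegral_inter hms1 G1).symm
        _ = ∫ x in S, G1 x * e1 x ∂μ := integral_congr_ae
            (Filter.Eventually.of_forall fun ω => by beta_reduce; rw [← hindmul1 G1 ω, mul_comm])
        _ = ∫ x in S, G1 x * p1 x ∂μ :=
            aux_pullout hm stronglyMeasurable_condExp hG1e1int he1int hS
    have h2 : ∫ x in S ∩ s1, (1 - p0 x) * gU₁ x ∂μ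
        = ∫ x in S, (1 - p0 x) * G1 x ∂μ := by
      calc ∫ x in S ∩ s1, (1 - p0 x) * gU₁ x ∂μ
          = ∫ x in S, s1.indicator (fun ω => (1 - p0 ω) * gU₁ ω) x ∂μ :=
            (aux_setIntegral_inter hms1 _).symm
        _ = ∫ x in S, (1 - p0 x) * (e1 x * gU₁ x) ∂μ := integral_congr_ae
            (Filter.Eventually.of_forall fun ω => by
              beta_reduce; rw [← hindmul1 (fun ω => (1 - p0 ω) * gU₁ ω) ω]; ring)
        _ = ∫ x in S, (1 - p0 x) * G1 x ∂μ :=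
            aux_pullout hm (stronglyMeasurable_const.sub stronglyMeasurable_condExp)
              h1mp0e1g1int he1g1int hS
    have h3 : ∫ x in S, G1 x * p1 x ∂μ = ∫ x in S, (1 - p0 x) * G1 x ∂μ :=
      integral_congr_ae (ae_restrict_of_ae (hp01.mono fun ω h => by
        have h' : p0 ω = 1 - p1 ω := h
        beta_reduce; rw [h']; ring))
    rw [h1, h2]; exact h3
  have heq0 : ∀ S : Set Ω, MeasurableSet[m] S →
      ∫ x in S ∩ s0, G0 x ∂μ = ∫ x in S ∩ s0, p0 x * gU₁ x ∂μ := by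
    intro S hS
    have h1 : ∫ x in S ∩ s0, G0 x ∂μ = ∫ x in S, G0 x * p0 x ∂μ := by
      calc ∫ x in S ∩ s0, G0 x ∂μ
          = ∫ x in S, s0.indicator G0 x ∂μ := (aux_setIntegral_inter hms0 G0).symm
        _ = ∫ x in S, G0 x * e0 x ∂μ := integral_congr_ae
            (Filter.Eventually.of_forall fun ω => by beta_reduce; rw [← hindmul0 G0 ω, mul_comm])
        _ = ∫ x in S, G0 x * p0 x ∂μ :=
            aux_pullout hm stronglyMeasurable_condExp hG0e0int he0int hS
    have h2 : ∫ x in S ∩ s0, p0 x * gU₁ x ∂μ = ∫ x in S, p0 x * G0 x ∂μ := by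
      calc ∫ x in S ∩ s0, p0 x * gU₁ x ∂μ
          = ∫ x in S, s0.indicator (fun ω => p0 ω * gU₁ ω) x ∂μ :=
            (aux_setIntegral_inter hms0 _).symm
        _ = ∫ x in S, p0 x * (e0 x * gU₁ x) ∂μ := integral_congr_ae
            (Filter.Eventually.of_forall fun ω => by
              beta_reduce; rw [← hindmul0 (fun ω => p0 ω * gU₁ ω) ω]; ring)
        _ = ∫ x in S, p0 x * G0 x ∂μ :=
            aux_pullout hm stronglyMeasurable_condExp hp0e0g1int he0g1int hS
    rw [h1, h2]
    exact integral_congr_ae (ae_restrict_of_ae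
      (Filter.Eventually.of_forall fun ω => mul_comm _ _))
  have hr1 : G1 =ᵐ[μ[|s1]] (μ[|s1])[fun ω => (1 - p0 ω) * gU₁ ω|m] :=
    aux_condexp_cond hm hms1 hs1ne hrint stronglyMeasurable_condExp integrable_condExp heq1
  have hr0 : G0 =ᵐ[μ[|s0]] (μ[|s0])[fun ω => p0 ω * gU₁ ω|m] :=
    aux_condexp_cond hm hms0 hs0ne hp0g1int stronglyMeasurable_condExp integrable_condExp heq0
  -- the two conditional chains
  have hch1 : (fun ω => ((μ[|s1])[Y|m]) ω - ((μ[|s1])[hfun|m]) ω) =ᵐ[μ[|s1]] G1 := by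
    have hYi : Integrable Y (μ[|s1]) := aux_integrable_cond hint hs1ne
    have hhi : Integrable hfun (μ[|s1]) := aux_integrable_cond hhfunint hs1ne
    have hεi : Integrable εY (μ[|s1]) := aux_integrable_cond hεint hs1ne
    have hri : Integrable (fun ω => (1 - p0 ω) * gU₁ ω) (μ[|s1]) :=
      aux_integrable_cond hrint hs1ne
    calc (fun ω => ((μ[|s1])[Y|m]) ω - ((μ[|s1])[hfun|m]) ω)
        = (μ[|s1])[Y|m] - (μ[|s1])[hfun|m] := rfl
      _ =ᵐ[μ[|s1]] (μ[|s1])[Y - hfun|m] := (condExp_sub hYi hhi m).symm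
      _ =ᵐ[μ[|s1]] (μ[|s1])[εY + fun ω => (1 - p0 ω) * gU₁ ω|m] := by
          refine condExp_congr_ae ?_
          filter_upwards [hmem1] with ω hω
          simp only [Pi.sub_apply, Pi.add_apply, hfun_def]
          rw [hY ω, hω]; ring
      _ =ᵐ[μ[|s1]] (μ[|s1])[εY|m] + (μ[|s1])[fun ω => (1 - p0 ω) * gU₁ ω|m] :=
          condExp_add hεi hri m
      _ =ᵐ[μ[|s1]] G1 := by
          filter_upwards [hεcond1, hr1] with ω h1 h2
          rw [Pi.add_apply, ← h1, ← h2, Pi.zero_apply, zero_add]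
  have hch0 : (fun ω => ((μ[|s0])[Y|m]) ω - ((μ[|s0])[hfun|m]) ω)
      =ᵐ[μ[|s0]] (fun ω => -G0 ω) := by
    have hYi : Integrable Y (μ[|s0]) := aux_integrable_cond hint hs0ne
    have hhi : Integrable hfun (μ[|s0]) := aux_integrable_cond hhfunint hs0ne
    have hεi : Integrable εY (μ[|s0]) := aux_integrable_cond hεint hs0ne
    have hqi : Integrable (fun ω => p0 ω * gU₁ ω) (μ[|s0]) :=
      aux_integrable_cond hp0g1int hs0ne
    calc (fun ω => ((μ[|s0])[Y|m]) ω - ((μ[|s0])[hfun|m]) ω)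
        = (μ[|s0])[Y|m] - (μ[|s0])[hfun|m] := rfl
      _ =ᵐ[μ[|s0]] (μ[|s0])[Y - hfun|m] := (condExp_sub hYi hhi m).symm
      _ =ᵐ[μ[|s0]] (μ[|s0])[εY - fun ω => p0 ω * gU₁ ω|m] := by
          refine condExp_congr_ae ?_
          filter_upwards [hmem0] with ω hω
          simp only [Pi.sub_apply, hfun_def]
          rw [hY ω, hω]; ring
      _ =ᵐ[μ[|s0]] (μ[|s0])[εY|m] - (μ[|s0])[fun ω => p0 ω * gU₁ ω|m] :=
          condExp_sub hεi hqi m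
      _ =ᵐ[μ[|s0]] (fun ω => -G0 ω) := by
          filter_upwards [hεcond0, hr0] with ω h1 h2
          rw [Pi.sub_apply, ← h1, ← h2, Pi.zero_apply, zero_sub]
  -- transfer to a.e. μ
  have htr1 : ∀ {f g : Ω → ℝ}, StronglyMeasurable[m] f → StronglyMeasurable[m] g →
      f =ᵐ[μ[|s1]] g → f =ᵐ[μ] g := fun hf hg hfg =>
    aux_transfer hm hms1 hs1ne he1ind he1int (hpos.mono fun ω h => h.1) hf hg hfg
  have htr0 : ∀ {f g : Ω → ℝ}, StronglyMeasurable[m] f → StronglyMeasurable[m] g →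
      f =ᵐ[μ[|s0]] g → f =ᵐ[μ] g := fun hf hg hfg =>
    aux_transfer hm hms0 hs0ne he0ind he0int (hp0pos.mono fun ω h => h.1) hf hg hfg
  have T1 : (fun ω => ((μ[|s1])[Y|m]) ω - ((μ[|s1])[hfun|m]) ω) =ᵐ[μ] G1 :=
    htr1 (stronglyMeasurable_condExp.sub stronglyMeasurable_condExp)
      stronglyMeasurable_condExp hch1
  have T0 : (fun ω => ((μ[|s0])[Y|m]) ω - ((μ[|s0])[hfun|m]) ω) =ᵐ[μ] (fun ω => -G0 ω) :=
    htr0 (stronglyMeasurable_condExp.sub stronglyMeasurable_condExp)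
      stronglyMeasurable_condExp.neg hch0
  -- the CATE decomposition
  have TG : μ[gU₁|m] =ᵐ[μ] fun ω => G1 ω + G0 ω := by
    have h2 : gU₁ = (fun ω => e1 ω * gU₁ ω) + fun ω => e0 ω * gU₁ ω := by
      funext ω
      rcases hbin ω with h | h <;> simp [he1_def, he0_def, h, Pi.add_apply] <;> norm_num
    rw [h2]
    exact (condExp_add he1g1int he0g1int m).trans
      (Filter.Eventually.of_forall fun ω => rfl)
  -- conclusion
  filter_upwards [T1, T0, TG] with ω h1 h0 hG
  have h1' : ((μ[|s1])[Y|m]) ω - ((μ[|s1])[hfun|m]) ω = G1 ω := h1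
  have h0' : ((μ[|s0])[Y|m]) ω - ((μ[|s0])[hfun|m]) ω = -G0 ω := h0
  have hG' : (μ[gU₁|m]) ω = G1 ω + G0 ω := hG
  rw [hG']
  linarith [h1', h0']

/-- Let `Y = ε_Y + g₀(U) + A g₁(U)` with `A ∈ {0,1}`, `E[ε_Y | U, Z, A] = 0`, and potential
outcomes `Y(a) = ε_Y + g₀(U) + a g₁(U)`. Then `E[Y | Z, A=1] − E[Y | Z, A=0]` equals the
true CATE `E[g₁(U) | Z]` plus the bias term `E[h(U,Z) | Z, A=1] − E[h(U,Z) | Z, A=0]`,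
where `h(U, Z) = g₀(U) + P(A = 0 | Z) g₁(U)`. -/
theorem stmt10 {Ω : Type*} [mΩ : MeasurableSpace Ω]
    (μ : Measure Ω) [IsProbabilityMeasure μ]
    {k p : ℕ} (U : Ω → Fin k → ℝ) (Z : Ω → Fin p → ℝ) (A : Ω → ℝ) (εY : Ω → ℝ)
    (hU : Measurable U) (hZ : Measurable Z) (hA : Measurable A) (hεY : Measurable εY)
    (g₀ g₁ : (Fin k → ℝ) → ℝ) (hg₀ : Measurable g₀) (hg₁ : Measurable g₁)
    -- `A` is binary
    (hbin : ∀ ω, A ω = 0 ∨ A ω = 1)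
    -- mean-zero noise: `E[ε_Y | U, Z, A] = 0`
    (hnoise : μ[εY | MeasurableSpace.comap (fun ω => (U ω, Z ω, A ω)) inferInstance]
      =ᵐ[μ] 0)
    -- the outcome and potential outcomes
    (Y : Ω → ℝ) (hY : ∀ ω, Y ω = εY ω + g₀ (U ω) + A ω * g₁ (U ω))
    (Ypot : ℝ → Ω → ℝ) (hYpot : ∀ a ω, Ypot a ω = εY ω + g₀ (U ω) + a * g₁ (U ω))
    -- positivity: `0 < P(A = 1 | Z) < 1` a.s.
    (hpos : ∀ᵐ ω ∂μ,
      0 < (μ[(fun ω' => if A ω' = 1 then (1 : ℝ) else 0) |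
            MeasurableSpace.comap Z inferInstance]) ω ∧
      (μ[(fun ω' => if A ω' = 1 then (1 : ℝ) else 0) |
            MeasurableSpace.comap Z inferInstance]) ω < 1)
    -- integrability
    (hint : Integrable Y μ) (hg₀int : Integrable (fun ω => g₀ (U ω)) μ)
    (hg₁int : Integrable (fun ω => g₁ (U ω)) μ) :
    ∀ᵐ ω ∂μ,
      ((μ[|{ω' | A ω' = 1}])[Y | MeasurableSpace.comap Z inferInstance]) ω -
        ((μ[|{ω' | A ω' = 0}])[Y | MeasurableSpace.comap Z inferInstance]) ω =
      (μ[(fun ω' => g₁ (U ω')) | MeasurableSpace.comap Z inferInstance]) ω +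
        (((μ[|{ω' | A ω' = 1}])[(fun ω' => g₀ (U ω') +
            (μ[(fun ω'' => if A ω'' = 0 then (1 : ℝ) else 0) |
              MeasurableSpace.comap Z inferInstance]) ω' * g₁ (U ω')) |
            MeasurableSpace.comap Z inferInstance]) ω -
          ((μ[|{ω' | A ω' = 0}])[(fun ω' => g₀ (U ω') +
            (μ[(fun ω'' => if A ω'' = 0 then (1 : ℝ) else 0) |
              MeasurableSpace.comap Z inferInstance]) ω' * g₁ (U ω')) |
            MeasurableSpace.comap Z inferInstance]) ω) := by
  classical
  have hm : MeasurableSpace.comap Z inferInstance ≤ mΩ := hZ.comap_le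
  have hmA : MeasurableSpace.comap (fun ω => (U ω, Z ω, A ω)) inferInstance ≤ mΩ :=
    (hU.prodMk (hZ.prodMk hA)).comap_le
  -- integrability of the noise
  have bound_mul : ∀ c x : ℝ, |c| ≤ 1 → ‖c * x‖ ≤ ‖x‖ := fun c x h => by
    rw [Real.norm_eq_abs, Real.norm_eq_abs, abs_mul]
    nlinarith [abs_nonneg x, abs_nonneg c]
  have habsA : ∀ ω, |A ω| ≤ 1 := fun ω => by rcases hbin ω with h | h <;> rw [h] <;> norm_num
  have hAg1int : Integrable (fun ω => A ω * g₁ (U ω)) μ :=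
    hg₁int.norm.mono' ((hA.mul (hg₁.comp hU)).aestronglyMeasurable)
      (Filter.Eventually.of_forall fun ω => bound_mul _ _ (habsA ω))
  have hεint : Integrable εY μ := by
    have h1 : εY = fun ω => Y ω - (g₀ (U ω) + A ω * g₁ (U ω)) := by
      funext ω; rw [hY ω]; ring
    rw [h1]
    exact hint.sub (hg₀int.add hAg1int)
  -- the noise integrates to zero over sets measurable w.r.t. `(U, Z, A)`
  have hεzero : ∀ t : Set Ω,
      MeasurableSet[MeasurableSpace.comap (fun ω => (U ω, Z ω, A ω)) inferInstance] t →
      ∫ x in t, εY x ∂μ = 0 := by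
    intro t ht
    rw [← setIntegral_condExp hmA hεint ht]
    calc ∫ x in t, (μ[εY|MeasurableSpace.comap (fun ω => (U ω, Z ω, A ω)) inferInstance]) x ∂μ
        = ∫ x in t, (0:Ω→ℝ) x ∂μ := integral_congr_ae (ae_restrict_of_ae hnoise)
      _ = 0 := by simp
  have hε1 : ∀ S : Set Ω, MeasurableSet[MeasurableSpace.comap Z inferInstance] S →
      ∫ x in S ∩ {ω' | A ω' = 1}, εY x ∂μ = 0 := by
    intro S hS
    obtain ⟨B, hB, rfl⟩ := hS
    refine hεzero _ ⟨Set.univ ×ˢ B ×ˢ {1},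
      MeasurableSet.univ.prod (hB.prod (measurableSet_singleton 1)), ?_⟩
    ext ω
    simp only [Set.mem_preimage, Set.mem_prod, Set.mem_inter_iff, Set.mem_setOf_eq,
      Set.mem_univ, Set.mem_singleton_iff, true_and]
  have hε0 : ∀ S : Set Ω, MeasurableSet[MeasurableSpace.comap Z inferInstance] S →
      ∫ x in S ∩ {ω' | A ω' = 0}, εY x ∂μ = 0 := by
    intro S hS
    obtain ⟨B, hB, rfl⟩ := hS
    refine hεzero _ ⟨Set.univ ×ˢ B ×ˢ {0},
      MeasurableSet.univ.prod (hB.prod (measurableSet_singleton 0)), ?_⟩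
    ext ω
    simp only [Set.mem_preimage, Set.mem_prod, Set.mem_inter_iff, Set.mem_setOf_eq,
      Set.mem_univ, Set.mem_singleton_iff, true_and]
  exact main_aux hm μ A εY hA (fun ω => g₀ (U ω)) (fun ω => g₁ (U ω)) (hg₁.comp hU)
    hbin Y hY hpos hint hg₀int hg₁int hε1 hε0
end

section
/- In the additive noise outcome model Y = ε_Y + g₀(U) + A g₁(U) with affine g₀(u) = c₀ + c₁'u and g₁(u) = c₂ + c₃'u, the bias of the proxy-adjusted estimator E[Y | Z, A=1] − E[Y | Z, A=0] relative to the true CATE E[g₁(U) | Z] equals (c₁ + P(A=0 | Z) c₃)' (E[U | Z, A=1] − E[U | Z, A=0]). -/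
open Matrix MeasureTheory ProbabilityTheory
open scoped ENNReal NNReal

section Helpers

variable {Ω : Type*} {m : MeasurableSpace Ω} [mΩ : MeasurableSpace Ω] {μ : Measure Ω}

/-- dot product with a fixed vector, as a continuous linear map -/
noncomputable def dotCLM {k : ℕ} (c : Fin k → ℝ) : (Fin k → ℝ) →L[ℝ] ℝ :=
  ∑ i : Fin k, c i • (ContinuousLinearMap.proj i : (Fin k → ℝ) →L[ℝ] ℝ)

lemma dotCLM_apply {k : ℕ} (c v : Fin k → ℝ) : dotCLM c v = c ⬝ᵥ v := by
  simp [dotCLM, dotProduct, ContinuousLinearMap.sum_apply]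

lemma integrable_dot {k : ℕ} (c : Fin k → ℝ) {f : Ω → Fin k → ℝ}
    (hf : Integrable f μ) : Integrable (fun ω => c ⬝ᵥ f ω) μ := by
  have := (dotCLM c).integrable_comp hf
  simpa [dotCLM_apply] using this

lemma condexp_dot {k : ℕ} (c : Fin k → ℝ) (hm : m ≤ mΩ)
    [SigmaFinite (μ.trim hm)] {f : Ω → Fin k → ℝ} (hf : Integrable f μ) :
    μ[fun ω => c ⬝ᵥ f ω|m] =ᵐ[μ] fun ω => c ⬝ᵥ (μ[f|m]) ω := by
  refine (ae_eq_condExp_of_forall_setIntegral_eq hm (integrable_dot c hf)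
    (fun s _ _ => (integrable_dot c integrable_condExp).integrableOn)
    (fun s hs hμs => ?_) ?_).symm
  · have h1 : ∫ x in s, c ⬝ᵥ (μ[f|m]) x ∂μ = c ⬝ᵥ ∫ x in s, (μ[f|m]) x ∂μ := by
      rw [show (fun x => c ⬝ᵥ (μ[f|m]) x) = fun x => dotCLM c ((μ[f|m]) x) by
        funext x; rw [dotCLM_apply]]
      rw [(dotCLM c).integral_comp_comm integrable_condExp.integrableOn, dotCLM_apply]
    have h2 : ∫ x in s, c ⬝ᵥ f x ∂μ = c ⬝ᵥ ∫ x in s, f x ∂μ := by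
      rw [show (fun x => c ⬝ᵥ f x) = fun x => dotCLM c (f x) by
        funext x; rw [dotCLM_apply]]
      rw [(dotCLM c).integral_comp_comm hf.integrableOn, dotCLM_apply]
    rw [h1, h2, setIntegral_condExp hm hf hs]
  · refine StronglyMeasurable.aestronglyMeasurable ?_
    have : StronglyMeasurable[m] (fun x => dotCLM c ((μ[f|m]) x)) :=
      (dotCLM c).continuous.comp_stronglyMeasurable stronglyMeasurable_condExp
    simpa [dotCLM_apply] using this

/-- trimmed versions of `μ.restrict s` and of `μ` with density `E[1_s | m]` agree -/
lemma trim_restrict_eq_trim_withDensity (hm : m ≤ mΩ) [IsFiniteMeasure μ]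
    {s : Set Ω} (hs : MeasurableSet s) :
    (μ.restrict s).trim hm
      = (μ.withDensity fun ω => ENNReal.ofReal ((μ[s.indicator (fun _ => (1:ℝ))|m]) ω)).trim hm := by
  set p := μ[s.indicator (fun _ => (1:ℝ))|m] with hp
  have hpmeas : Measurable p := (stronglyMeasurable_condExp.measurable).mono hm le_rfl
  have hpnn : 0 ≤ᵐ[μ] p :=
    condExp_nonneg (Filter.Eventually.of_forall fun ω => Set.indicator_nonneg (fun _ _ => zero_le_one) ω)
  refine @Measure.ext Ω m _ _ fun S hS => ?_
  rw [trim_measurableSet_eq hm hS, trim_measurableSet_eq hm hS,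
    Measure.restrict_apply' hs, withDensity_apply _ (hm S hS)]
  have hind : Integrable (s.indicator fun _ => (1:ℝ)) μ :=
    (integrable_const (1:ℝ)).indicator hs
  have h1 : ∫ x in S, s.indicator (fun _ => (1:ℝ)) x ∂μ = (μ (S ∩ s)).toReal := by
    rw [setIntegral_indicator hs]
    simp [Measure.restrict_apply' hs, Set.inter_comm]
    rfl
  have h2 : ∫ x in S, p x ∂μ = (μ (S ∩ s)).toReal := by
    rw [setIntegral_condExp hm hind hS, h1]
  have h3 : ∫⁻ x in S, ENNReal.ofReal (p x) ∂μ = ENNReal.ofReal (∫ x in S, p x ∂μ) := by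
    rw [← ofReal_integral_eq_lintegral_ofReal integrable_condExp.integrableOn
      (ae_restrict_of_ae hpnn)]
  rw [h3, h2, ENNReal.ofReal_toReal (measure_ne_top μ _)]

lemma integral_restrict_eq_condExp_smul {G : Type*} [NormedAddCommGroup G] [NormedSpace ℝ G]
    (hm : m ≤ mΩ) [IsFiniteMeasure μ] {s : Set Ω} (hs : MeasurableSet s)
    {h : Ω → G} (hh : StronglyMeasurable[m] h) :
    ∫ ω, h ω ∂(μ.restrict s) = ∫ ω, (μ[s.indicator (fun _ => (1:ℝ))|m]) ω • h ω ∂μ := by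
  set p := μ[s.indicator (fun _ => (1:ℝ))|m] with hp
  have hpmeas : Measurable p := (stronglyMeasurable_condExp.measurable).mono hm le_rfl
  have hpnn : 0 ≤ᵐ[μ] p :=
    condExp_nonneg (Filter.Eventually.of_forall fun ω => Set.indicator_nonneg (fun _ _ => zero_le_one) ω)
  have hd : Measurable fun ω => (p ω).toNNReal := hpmeas.real_toNNReal
  calc ∫ ω, h ω ∂(μ.restrict s)
      = ∫ ω, h ω ∂((μ.restrict s).trim hm) := integral_trim hm hh
    _ = ∫ ω, h ω ∂((μ.withDensity fun ω => ENNReal.ofReal (p ω)).trim hm) := by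
        rw [trim_restrict_eq_trim_withDensity hm hs]
    _ = ∫ ω, h ω ∂(μ.withDensity fun ω => ENNReal.ofReal (p ω)) := (integral_trim hm hh).symm
    _ = ∫ ω, h ω ∂(μ.withDensity fun ω => ((p ω).toNNReal : ℝ≥0∞)) := rfl
    _ = ∫ ω, (p ω).toNNReal • h ω ∂μ := integral_withDensity_eq_integral_smul hd h
    _ = ∫ ω, p ω • h ω ∂μ := by
        refine integral_congr_ae ?_
        filter_upwards [hpnn] with ω hω
        rw [NNReal.smul_def, Real.coe_toNNReal _ hω]

lemma lintegral_restrict_eq_condexp_mul (hm : m ≤ mΩ) [IsFiniteMeasure μ]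
    {s : Set Ω} (hs : MeasurableSet s)
    {φ : Ω → ℝ≥0∞} (hφ : Measurable[m] φ) :
    ∫⁻ ω, φ ω ∂(μ.restrict s)
      = ∫⁻ ω, ENNReal.ofReal ((μ[s.indicator (fun _ => (1:ℝ))|m]) ω) * φ ω ∂μ := by
  set p := μ[s.indicator (fun _ => (1:ℝ))|m] with hp
  have hpmeas : Measurable p := (stronglyMeasurable_condExp.measurable).mono hm le_rfl
  calc ∫⁻ ω, φ ω ∂(μ.restrict s)
      = ∫⁻ ω, φ ω ∂((μ.restrict s).trim hm) := (lintegral_trim hm hφ).symm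
    _ = ∫⁻ ω, φ ω ∂((μ.withDensity fun ω => ENNReal.ofReal (p ω)).trim hm) := by
        rw [trim_restrict_eq_trim_withDensity hm hs]
    _ = ∫⁻ ω, φ ω ∂(μ.withDensity fun ω => ENNReal.ofReal (p ω)) := lintegral_trim hm hφ
    _ = ∫⁻ ω, ENNReal.ofReal (p ω) * φ ω ∂μ := by
        rw [lintegral_withDensity_eq_lintegral_mul μ (hpmeas.ennreal_ofReal) (hφ.mono hm le_rfl)]
        rfl

/-- conditional expectation w.r.t. a conditioned measure, in terms of conditional
expectations w.r.t. the original measure -/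
lemma condexp_cond {E : Type*} [NormedAddCommGroup E] [NormedSpace ℝ E] [CompleteSpace E]
    (hm : m ≤ mΩ) [IsProbabilityMeasure μ]
    {s : Set Ω} (hs : MeasurableSet s) {f : Ω → E} (hf : Integrable f μ)
    (hp : ∀ᵐ ω ∂μ, 0 < (μ[s.indicator (fun _ => (1:ℝ))|m]) ω) :
    (μ[|s])[f|m] =ᵐ[μ]
      fun ω => ((μ[s.indicator (fun _ => (1:ℝ))|m]) ω)⁻¹ • (μ[s.indicator f|m]) ω := by
  set p := μ[s.indicator (fun _ => (1:ℝ))|m] with hpdef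
  set q := μ[s.indicator f|m] with hqdef
  set g : Ω → E := fun ω => (p ω)⁻¹ • q ω with hgdef
  have hind : Integrable (s.indicator fun _ => (1:ℝ)) μ := (integrable_const (1:ℝ)).indicator hs
  have hpnn : 0 ≤ᵐ[μ] p :=
    condExp_nonneg (Filter.Eventually.of_forall fun ω =>
      Set.indicator_nonneg (fun _ _ => zero_le_one) ω)
  have hμsne : μ s ≠ 0 := by
    intro h0
    have h1 : (s.indicator (fun _ => (1:ℝ))) =ᵐ[μ] 0 := by
      have hns : ∀ᵐ ω ∂μ, ω ∉ s := by
        rw [ae_iff]; simpa using h0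
      filter_upwards [hns] with ω hω
      simp [Set.indicator_of_notMem hω]
    have h2 : p =ᵐ[μ] 0 := by
      calc p =ᵐ[μ] μ[(0 : Ω → ℝ)|m] := condExp_congr_ae h1
        _ = 0 := condExp_zero
    have h3 : ∀ᵐ _ ∂μ, False := by
      filter_upwards [hp, h2] with ω h4 h5
      rw [h5] at h4
      exact lt_irrefl 0 h4
    haveI : (ae μ).NeBot := ae_neBot.mpr (IsProbabilityMeasure.ne_zero μ)
    obtain ⟨_, hfalse⟩ := h3.exists
    exact hfalse
  haveI hcondprob : IsProbabilityMeasure (μ[|s]) := cond_isProbabilityMeasure hμsne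
  have hμsinvne : (μ s)⁻¹ ≠ ∞ := ENNReal.inv_ne_top.mpr hμsne
  have hcondeq : μ[|s] = (μ s)⁻¹ • μ.restrict s := rfl
  have hpinv : StronglyMeasurable[m] fun ω => (p ω)⁻¹ :=
    (stronglyMeasurable_condExp.measurable.inv).stronglyMeasurable
  have hgsm : StronglyMeasurable[m] g := hpinv.smul stronglyMeasurable_condExp
  have hqint : Integrable q μ := integrable_condExp
  have hpg : ∀ᵐ ω ∂μ, p ω • g ω = q ω := by
    filter_upwards [hp] with ω h
    exact smul_inv_smul₀ h.ne' (q ω)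
  have hgint_res : Integrable g (μ.restrict s) := by
    constructor
    · exact (hgsm.mono hm).aestronglyMeasurable
    · rw [HasFiniteIntegral]
      rw [lintegral_restrict_eq_condexp_mul hm hs hgsm.enorm]
      have hcongr : ∀ᵐ ω ∂μ,
          ENNReal.ofReal (p ω) * ‖g ω‖ₑ = ‖q ω‖ₑ := by
        filter_upwards [hpg, hp] with ω h1 h2
        rw [← Real.enorm_eq_ofReal h2.le, ← enorm_smul, h1]
      rw [lintegral_congr_ae hcongr]
      exact hqint.2
  have hgint : Integrable g (μ[|s]) := by
    rw [hcondeq]; exact hgint_res.smul_measure hμsinvne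
  have hfint : Integrable f (μ[|s]) := by
    rw [hcondeq]; exact hf.restrict.smul_measure hμsinvne
  have heq : ∀ S, MeasurableSet[m] S → (μ[|s]) S < ∞ →
      ∫ x in S, g x ∂(μ[|s]) = ∫ x in S, f x ∂(μ[|s]) := by
    intro S hS _
    have hresS : ∫ x in S, g x ∂(μ.restrict s) = ∫ x in S, f x ∂(μ.restrict s) := by
      have e1 : ∫ x in S, g x ∂(μ.restrict s) = ∫ x, S.indicator g x ∂(μ.restrict s) :=
        (integral_indicator (hm S hS)).symm
      have e2 : ∫ x, S.indicator g x ∂(μ.restrict s) = ∫ x, p x • S.indicator g x ∂μ :=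
        integral_restrict_eq_condExp_smul hm hs (hgsm.indicator hS)
      have e3 : ∫ x, p x • S.indicator g x ∂μ
          = ∫ x, S.indicator (fun ω => p ω • g ω) x ∂μ := by
        refine integral_congr_ae (Filter.Eventually.of_forall fun ω => ?_)
        by_cases hω : ω ∈ S <;> simp [hω]
      have e4 : ∫ x, S.indicator (fun ω => p ω • g ω) x ∂μ = ∫ x in S, p x • g x ∂μ :=
        integral_indicator (hm S hS)
      have e5 : ∫ x in S, p x • g x ∂μ = ∫ x in S, q x ∂μ :=
        integral_congr_ae (ae_restrict_of_ae hpg)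
      have e6 : ∫ x in S, q x ∂μ = ∫ x in S, s.indicator f x ∂μ :=
        setIntegral_condExp hm (hf.indicator hs) hS
      have e7 : ∫ x in S, s.indicator f x ∂μ = ∫ x in S ∩ s, f x ∂μ := setIntegral_indicator hs
      have e8 : ∫ x in S, f x ∂(μ.restrict s) = ∫ x in S ∩ s, f x ∂μ := by
        rw [Measure.restrict_restrict (hm S hS)]
      rw [e1, e2, e3, e4, e5, e6, e7, e8]
    rw [hcondeq, Measure.restrict_smul, integral_smul_measure, integral_smul_measure, hresS]
  have hae : g =ᵐ[μ[|s]] (μ[|s])[f|m] :=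
    ae_eq_condExp_of_forall_setIntegral_eq hm hfint (fun S _ _ => hgint.integrableOn) heq
      hgsm.aestronglyMeasurable
  set c' := (μ[|s])[f|m] with hc'def
  set D := {ω | ¬ g ω = c' ω} with hDdef
  have hDm : MeasurableSet[m] D := by
    have h := (hgsm.measurableSet_eq_fun
      (stronglyMeasurable_condExp (μ := μ[|s]) (f := f) (m := m))).compl
    rw [Set.compl_setOf] at h
    exact h
  have h5 : μ (s ∩ D) = 0 := by
    have h6 : μ[|s] D = 0 := by
      have := hae
      rw [Filter.EventuallyEq, ae_iff] at this
      exact this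
    rw [cond_apply hs] at h6
    rcases mul_eq_zero.mp h6 with h | h
    · exact absurd h (ENNReal.inv_ne_zero.mpr (measure_ne_top μ s))
    · exact h
  have h7 : ∫ x in D, p x ∂μ = 0 := by
    rw [setIntegral_condExp hm hind hDm, setIntegral_indicator hs, setIntegral_const,
      smul_eq_mul, mul_one, Set.inter_comm D s, measureReal_def, h5, ENNReal.toReal_zero]
  have h8 : p =ᵐ[μ.restrict D] 0 :=
    (integral_eq_zero_iff_of_nonneg_ae (ae_restrict_of_ae hpnn)
      integrable_condExp.integrableOn).mp h7
  have h9 : μ D = 0 := by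
    have h10 : ∀ᵐ _ ∂μ.restrict D, False := by
      filter_upwards [ae_restrict_of_ae hp, h8] with ω h11 h12
      rw [h12] at h11
      exact lt_irrefl 0 h11
    rw [ae_iff] at h10
    simpa [Measure.restrict_apply_univ] using h10
  rw [Filter.EventuallyEq, ae_iff]
  refine measure_mono_null (fun ω hω => ?_) h9
  intro hgc
  exact hω (hgc.symm)

lemma indicator_noise_condexp {𝒢 : MeasurableSpace Ω} [IsProbabilityMeasure μ]
    (hm𝒢 : m ≤ 𝒢) (h𝒢 : 𝒢 ≤ mΩ) {εY : Ω → ℝ} (hεYint : Integrable εY μ)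
    (hnoise : μ[εY|𝒢] =ᵐ[μ] 0) {s : Set Ω} (hs𝒢 : MeasurableSet[𝒢] s) :
    μ[s.indicator εY|m] =ᵐ[μ] 0 := by
  have h1 : μ[s.indicator εY|m] =ᵐ[μ] μ[μ[s.indicator εY|𝒢]|m] :=
    (condExp_condExp_of_le hm𝒢 h𝒢).symm
  have h2 : μ[s.indicator εY|𝒢] =ᵐ[μ] 0 := by
    refine (condExp_indicator hεYint hs𝒢).trans ?_
    filter_upwards [hnoise] with ω hω
    by_cases hωs : ω ∈ s
    · simp [Set.indicator_of_mem hωs, hω]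
    · simp [Set.indicator_of_notMem hωs]
  refine h1.trans ?_
  calc μ[μ[s.indicator εY|𝒢]|m] =ᵐ[μ] μ[(0 : Ω → ℝ)|m] := condExp_congr_ae h2
    _ = 0 := condExp_zero

theorem stmt11_aux {Ω : Type*} {m 𝒢 : MeasurableSpace Ω} [mΩ : MeasurableSpace Ω]
    (μ : Measure Ω) [IsProbabilityMeasure μ]
    {k : ℕ} (U : Ω → Fin k → ℝ) (A : Ω → ℝ) (εY : Ω → ℝ)
    (hU : Measurable U) (hA : Measurable A)
    (hm : m ≤ mΩ) (hm𝒢 : m ≤ 𝒢) (h𝒢 : 𝒢 ≤ mΩ)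
    (hA𝒢₁ : MeasurableSet[𝒢] {ω | A ω = 1}) (hA𝒢₀ : MeasurableSet[𝒢] {ω | A ω = 0})
    (c₀ c₂ : ℝ) (c₁ c₃ : Fin k → ℝ)
    (hbin : ∀ ω, A ω = 0 ∨ A ω = 1)
    (hpos : ∀ᵐ ω ∂μ,
      0 < (μ[({ω' | A ω' = 1}).indicator (fun _ => (1:ℝ))|m]) ω ∧
      (μ[({ω' | A ω' = 1}).indicator (fun _ => (1:ℝ))|m]) ω < 1)
    (hnoise : μ[εY|𝒢] =ᵐ[μ] 0)
    (Y : Ω → ℝ)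
    (hY : ∀ ω, Y ω = εY ω + (c₀ + c₁ ⬝ᵥ U ω) + A ω * (c₂ + c₃ ⬝ᵥ U ω))
    (hYint : Integrable Y μ) (hUint : Integrable U μ) :
    ∀ᵐ ω ∂μ,
      (((μ[|{ω' | A ω' = 1}])[Y|m]) ω - ((μ[|{ω' | A ω' = 0}])[Y|m]) ω) -
      (μ[(fun ω' => c₂ + c₃ ⬝ᵥ U ω')|m]) ω =
      (c₁ + (μ[({ω' | A ω' = 0}).indicator (fun _ => (1:ℝ))|m]) ω • c₃) ⬝ᵥ
        (((μ[|{ω' | A ω' = 1}])[U|m]) ω - ((μ[|{ω' | A ω' = 0}])[U|m]) ω) := by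
  haveI : SigmaFinite (μ.trim hm) := inferInstance
  set s₁ : Set Ω := {ω | A ω = 1} with hs₁def
  set s₀ : Set Ω := {ω | A ω = 0} with hs₀def
  have hs₁ : MeasurableSet s₁ := hA (measurableSet_singleton 1)
  have hs₀ : MeasurableSet s₀ := hA (measurableSet_singleton 0)
  set p₁ := μ[s₁.indicator (fun _ => (1:ℝ))|m] with hp₁def
  set p₀ := μ[s₀.indicator (fun _ => (1:ℝ))|m] with hp₀def
  set W₁ := μ[s₁.indicator U|m] with hW₁def
  set W₀ := μ[s₀.indicator U|m] with hW₀def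
  have hU1 : Integrable (s₁.indicator U) μ := hUint.indicator hs₁
  have hU0 : Integrable (s₀.indicator U) μ := hUint.indicator hs₀
  have hi1 : Integrable (s₁.indicator fun _ => (1:ℝ)) μ := (integrable_const (1:ℝ)).indicator hs₁
  have hi0 : Integrable (s₀.indicator fun _ => (1:ℝ)) μ := (integrable_const (1:ℝ)).indicator hs₀
  have hmem₁ : ∀ ω, A ω = 1 → (ω ∈ s₁ ∧ ω ∉ s₀) := by
    intro ω h
    refine ⟨h, fun hc => ?_⟩
    rw [hs₀def] at hc
    simp only [Set.mem_setOf_eq] at hc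
    rw [hc] at h; norm_num at h
  have hmem₀ : ∀ ω, A ω = 0 → (ω ∈ s₀ ∧ ω ∉ s₁) := by
    intro ω h
    refine ⟨h, fun hc => ?_⟩
    rw [hs₁def] at hc
    simp only [Set.mem_setOf_eq] at hc
    rw [hc] at h; norm_num at h
  -- p₀ + p₁ = 1 a.e.
  have hp0p1 : ∀ᵐ ω ∂μ, p₀ ω + p₁ ω = 1 := by
    have hsum : (s₀.indicator (fun _ => (1:ℝ)) + s₁.indicator (fun _ => (1:ℝ)))
        = fun _ => (1:ℝ) := by
      funext ω
      rcases hbin ω with h | h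
      · obtain ⟨h1, h2⟩ := hmem₀ ω h
        simp [Set.indicator_of_mem h1, Set.indicator_of_notMem h2]
      · obtain ⟨h1, h2⟩ := hmem₁ ω h
        simp [Set.indicator_of_mem h1, Set.indicator_of_notMem h2]
    have hadd := condExp_add (μ := μ) (m := m) hi0 hi1
    rw [hsum] at hadd
    rw [condExp_const hm (1:ℝ)] at hadd
    filter_upwards [hadd] with ω hω
    simpa using hω.symm
  have hp₁pos : ∀ᵐ ω ∂μ, 0 < p₁ ω := hpos.mono fun ω h => h.1
  have hp₀pos : ∀ᵐ ω ∂μ, 0 < p₀ ω := by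
    filter_upwards [hpos, hp0p1] with ω h1 h2
    linarith [h1.2]
  -- integrability of the noise
  have hdotint : ∀ c : Fin k → ℝ, Integrable (fun ω => c ⬝ᵥ U ω) μ :=
    fun c => integrable_dot c hUint
  have hUdm : ∀ c : Fin k → ℝ, Measurable fun ω => c ⬝ᵥ U ω := by
    intro c
    have h : Measurable fun ω => dotCLM c (U ω) := ((dotCLM c).continuous.measurable).comp hU
    simpa [dotCLM_apply] using h
  have hAg1 : Integrable (fun ω => A ω * (c₂ + c₃ ⬝ᵥ U ω)) μ := by
    refine Integrable.mono' (((integrable_const c₂).add (hdotint c₃)).abs)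
      ((hA.mul (measurable_const.add (hUdm c₃))).aestronglyMeasurable) ?_
    refine Filter.Eventually.of_forall fun ω => ?_
    rcases hbin ω with h | h <;> simp [h, abs_mul, abs_nonneg]
  have hεYint : Integrable εY μ := by
    have heY : εY = fun ω => Y ω - (c₀ + c₁ ⬝ᵥ U ω) - A ω * (c₂ + c₃ ⬝ᵥ U ω) := by
      funext ω; rw [hY ω]; ring
    rw [heY]
    exact (hYint.sub ((integrable_const c₀).add (hdotint c₁))).sub hAg1
  have hn₁ : μ[s₁.indicator εY|m] =ᵐ[μ] 0 :=
    indicator_noise_condexp hm𝒢 h𝒢 hεYint hnoise hA𝒢₁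
  have hn₀ : μ[s₀.indicator εY|m] =ᵐ[μ] 0 :=
    indicator_noise_condexp hm𝒢 h𝒢 hεYint hnoise hA𝒢₀
  -- decomposition of the indicator outcomes
  have hdec₁ : s₁.indicator Y = s₁.indicator εY + (c₀ + c₂) • s₁.indicator (fun _ => (1:ℝ))
      + fun ω => (c₁ + c₃) ⬝ᵥ s₁.indicator U ω := by
    funext ω
    simp only [Pi.add_apply, Pi.smul_apply, smul_eq_mul]
    by_cases hω : ω ∈ s₁
    · have hA1 : A ω = 1 := hω
      simp only [Set.indicator_of_mem hω]
      rw [hY ω, hA1, add_dotProduct]; ring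
    · simp [Set.indicator_of_notMem hω]
  have hdec₀ : s₀.indicator Y = s₀.indicator εY + c₀ • s₀.indicator (fun _ => (1:ℝ))
      + fun ω => c₁ ⬝ᵥ s₀.indicator U ω := by
    funext ω
    simp only [Pi.add_apply, Pi.smul_apply, smul_eq_mul]
    by_cases hω : ω ∈ s₀
    · have hA0 : A ω = 0 := hω
      simp only [Set.indicator_of_mem hω]
      rw [hY ω, hA0]; ring
    · simp [Set.indicator_of_notMem hω]
  have hc₁ : μ[s₁.indicator Y|m] =ᵐ[μ] fun ω => (c₀ + c₂) * p₁ ω + (c₁ + c₃) ⬝ᵥ W₁ ω := by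
    rw [hdec₁]
    have e1 := condExp_add (μ := μ) (m := m)
      ((hεYint.indicator hs₁).add (hi1.smul (c₀ + c₂))) (integrable_dot (c₁ + c₃) hU1)
    have e2 := condExp_add (μ := μ) (m := m) (hεYint.indicator hs₁) (hi1.smul (c₀ + c₂))
    have e3 := condExp_smul (μ := μ) (m := m) (c₀ + c₂) (s₁.indicator fun _ => (1:ℝ))
    have e4 := condexp_dot (c₁ + c₃) hm hU1
    filter_upwards [e1, e2, e3, e4, hn₁] with ω f1 f2 f3 f4 f5
    rw [f1]
    simp only [Pi.add_apply] at f2 ⊢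
    rw [f2, f3, f4, f5]
    simp [smul_eq_mul]
    rfl
  have hc₀ : μ[s₀.indicator Y|m] =ᵐ[μ] fun ω => c₀ * p₀ ω + c₁ ⬝ᵥ W₀ ω := by
    rw [hdec₀]
    have e1 := condExp_add (μ := μ) (m := m)
      ((hεYint.indicator hs₀).add (hi0.smul c₀)) (integrable_dot c₁ hU0)
    have e2 := condExp_add (μ := μ) (m := m) (hεYint.indicator hs₀) (hi0.smul c₀)
    have e3 := condExp_smul (μ := μ) (m := m) c₀ (s₀.indicator fun _ => (1:ℝ))
    have e4 := condexp_dot c₁ hm hU0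
    filter_upwards [e1, e2, e3, e4, hn₀] with ω f1 f2 f3 f4 f5
    rw [f1]
    simp only [Pi.add_apply] at f2 ⊢
    rw [f2, f3, f4, f5]
    simp [smul_eq_mul]
    rfl
  -- conditional expectation of the CATE
  have hg1 : μ[(fun ω => c₂ + c₃ ⬝ᵥ U ω)|m] =ᵐ[μ] fun ω => c₂ + c₃ ⬝ᵥ (W₀ ω + W₁ ω) := by
    have hre : (fun ω => c₂ + c₃ ⬝ᵥ U ω) = (fun _ => c₂) + fun ω => c₃ ⬝ᵥ U ω := rfl
    rw [hre]
    have e1 := condExp_add (μ := μ) (m := m) (integrable_const c₂) (hdotint c₃)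
    have e2 := condexp_dot c₃ hm hUint
    have hUdec : U = s₀.indicator U + s₁.indicator U := by
      funext ω
      rcases hbin ω with h | h
      · obtain ⟨h1, h2⟩ := hmem₀ ω h
        simp [Set.indicator_of_mem h1, Set.indicator_of_notMem h2]
      · obtain ⟨h1, h2⟩ := hmem₁ ω h
        simp [Set.indicator_of_mem h1, Set.indicator_of_notMem h2]
    have e3 := condExp_add (μ := μ) (m := m) hU0 hU1
    rw [← hUdec] at e3
    filter_upwards [e1, e2, e3] with ω f1 f2 f3
    rw [f1]
    simp only [Pi.add_apply]
    rw [condExp_const hm c₂, f2, f3]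
    simp
    rfl
  -- conditional expectations under the conditioned measures
  have hY₁ := condexp_cond hm hs₁ hYint hp₁pos
  have hY₀ := condexp_cond hm hs₀ hYint hp₀pos
  have hUc₁ := condexp_cond hm hs₁ hUint hp₁pos
  have hUc₀ := condexp_cond hm hs₀ hUint hp₀pos
  filter_upwards [hY₁, hY₀, hUc₁, hUc₀, hc₁, hc₀, hg1, hp0p1, hp₁pos, hp₀pos]
    with ω eY1 eY0 eU1 eU0 ec1 ec0 eg1 esum h1pos h0pos
  rw [eY1, eY0, eU1, eU0, ec1, ec0, eg1]
  have hq : p₀ ω = 1 - p₁ ω := by linarith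
  have hr0 : p₁ ω ≠ 0 := ne_of_gt h1pos
  have hq0 : (1:ℝ) - p₁ ω ≠ 0 := by rw [← hq]; exact ne_of_gt h0pos
  simp only [dotProduct_sub, dotProduct_smul, add_dotProduct, dotProduct_add,
    smul_dotProduct, smul_eq_mul, Pi.sub_apply]
  rw [← hp₀def, ← hp₁def, hq]
  field_simp
  ring

end Helpers

/-- In the additive noise model `Y = ε_Y + g₀(U) + A g₁(U)` with affine `g₀(u) = c₀ + c₁'u`
and `g₁(u) = c₂ + c₃'u`, the bias of `E[Y | Z, A=1] − E[Y | Z, A=0]` relative to the true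
CATE `E[g₁(U) | Z]` equals `(c₁ + P(A=0 | Z) c₃)' (E[U | Z, A=1] − E[U | Z, A=0])`. -/
theorem stmt11 {Ω : Type*} [mΩ : MeasurableSpace Ω]
    (μ : Measure Ω) [IsProbabilityMeasure μ]
    {k p : ℕ} (U : Ω → Fin k → ℝ) (Z : Ω → Fin p → ℝ) (A : Ω → ℝ) (εY : Ω → ℝ)
    (hU : Measurable U) (hZ : Measurable Z) (hA : Measurable A) (hεY : Measurable εY)
    (c₀ c₂ : ℝ) (c₁ c₃ : Fin k → ℝ)
    -- `A` is binary with positivity `0 < P(A=1 | Z) < 1` a.s.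
    (hbin : ∀ ω, A ω = 0 ∨ A ω = 1)
    (hpos : ∀ᵐ ω ∂μ,
      0 < (μ[(fun ω' => if A ω' = 1 then (1 : ℝ) else 0) |
            MeasurableSpace.comap Z inferInstance]) ω ∧
      (μ[(fun ω' => if A ω' = 1 then (1 : ℝ) else 0) |
            MeasurableSpace.comap Z inferInstance]) ω < 1)
    -- mean-zero noise: `E[ε_Y | U, Z, A] = 0`
    (hnoise : μ[εY | MeasurableSpace.comap (fun ω => (U ω, Z ω, A ω)) inferInstance]
      =ᵐ[μ] 0)
    -- the outcome
    (Y : Ω → ℝ)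
    (hY : ∀ ω, Y ω = εY ω + (c₀ + c₁ ⬝ᵥ U ω) + A ω * (c₂ + c₃ ⬝ᵥ U ω))
    -- integrability
    (hYint : Integrable Y μ) (hUint : Integrable U μ) :
    ∀ᵐ ω ∂μ,
      (((μ[|{ω' | A ω' = 1}])[Y | MeasurableSpace.comap Z inferInstance]) ω -
        ((μ[|{ω' | A ω' = 0}])[Y | MeasurableSpace.comap Z inferInstance]) ω) -
      (μ[(fun ω' => c₂ + c₃ ⬝ᵥ U ω') | MeasurableSpace.comap Z inferInstance]) ω =
      (c₁ + (μ[(fun ω'' => if A ω'' = 0 then (1 : ℝ) else 0) |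
          MeasurableSpace.comap Z inferInstance]) ω • c₃) ⬝ᵥ
        (((μ[|{ω' | A ω' = 1}])[U | MeasurableSpace.comap Z inferInstance]) ω -
          ((μ[|{ω' | A ω' = 0}])[U | MeasurableSpace.comap Z inferInstance]) ω) := by
  have hind1 : (fun ω' => if A ω' = 1 then (1:ℝ) else 0)
      = ({ω' | A ω' = 1}).indicator (fun _ => (1:ℝ)) := by
    funext ω
    by_cases h : A ω = 1 <;> simp [h, Set.indicator_apply, Set.mem_setOf_eq]
  have hind0 : (fun ω'' => if A ω'' = 0 then (1:ℝ) else 0)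
      = ({ω' | A ω' = 0}).indicator (fun _ => (1:ℝ)) := by
    funext ω
    by_cases h : A ω = 0 <;> simp [h, Set.indicator_apply, Set.mem_setOf_eq]
  rw [hind1] at hpos
  simp only [hind0]
  have htrip : Measurable (fun ω => (U ω, Z ω, A ω)) := hU.prodMk (hZ.prodMk hA)
  have h𝒢 : MeasurableSpace.comap (fun ω => (U ω, Z ω, A ω)) inferInstance ≤ mΩ :=
    htrip.comap_le
  have hm : MeasurableSpace.comap Z inferInstance ≤ mΩ := hZ.comap_le
  have hproj1 : Measurable fun x : (Fin k → ℝ) × ((Fin p → ℝ) × ℝ) => x.2.1 :=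
    measurable_snd.fst
  have hproj2 : Measurable fun x : (Fin k → ℝ) × ((Fin p → ℝ) × ℝ) => x.2.2 :=
    measurable_snd.snd
  have hm𝒢 : MeasurableSpace.comap Z inferInstance
      ≤ MeasurableSpace.comap (fun ω => (U ω, Z ω, A ω)) inferInstance := by
    have hZeq : Z = (fun x : (Fin k → ℝ) × ((Fin p → ℝ) × ℝ) => x.2.1)
        ∘ (fun ω => (U ω, Z ω, A ω)) := rfl
    calc MeasurableSpace.comap Z inferInstance
        = MeasurableSpace.comap (fun ω => (U ω, Z ω, A ω))
            (MeasurableSpace.comap (fun x : (Fin k → ℝ) × ((Fin p → ℝ) × ℝ) => x.2.1)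
              inferInstance) :=
          (MeasurableSpace.comap_comp
            (f := fun x : (Fin k → ℝ) × ((Fin p → ℝ) × ℝ) => x.2.1)
            (g := fun ω => (U ω, Z ω, A ω))).symm
      _ ≤ MeasurableSpace.comap (fun ω => (U ω, Z ω, A ω)) inferInstance :=
          MeasurableSpace.comap_mono hproj1.comap_le
  have hA𝒢₁ : MeasurableSet[MeasurableSpace.comap (fun ω => (U ω, Z ω, A ω)) inferInstance]
      {ω | A ω = 1} := ⟨{x | x.2.2 = 1}, hproj2 (measurableSet_singleton 1), rfl⟩
  have hA𝒢₀ : MeasurableSet[MeasurableSpace.comap (fun ω => (U ω, Z ω, A ω)) inferInstance]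
      {ω | A ω = 0} := ⟨{x | x.2.2 = 0}, hproj2 (measurableSet_singleton 0), rfl⟩
  exact stmt11_aux μ U A εY hU hA hm hm𝒢 h𝒢 hA𝒢₁ hA𝒢₀ c₀ c₂ c₁ c₃ hbin hpos hnoise
    Y hY hYint hUint
end

section
/- Under the affine-in-U additive noise model, if the vector c₁ + P(A=0 | Z) c₃ is orthogonal to E[U | Z, A=1] − E[U | Z, A=0] (conditionally on Z, almost surely), then the naive proxy-adjusted estimator E[Y | Z, A=1] − E[Y | Z, A=0] equals the true CATE E[Y(1) − Y(0) | Z] almost surely. -/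
open Matrix MeasureTheory ProbabilityTheory
noncomputable def dpCLM {k : ℕ} (c : Fin k → ℝ) : (Fin k → ℝ) →L[ℝ] ℝ :=
  LinearMap.toContinuousLinearMap
    { toFun := fun v => c ⬝ᵥ v
      map_add' := fun v w => dotProduct_add c v w
      map_smul' := fun a v => by simp [dotProduct_smul, smul_eq_mul] }

@[simp] lemma dpCLM_apply {k : ℕ} (c v : Fin k → ℝ) : dpCLM c v = c ⬝ᵥ v := rfl

lemma cond_setIntegral' {Ω : Type*} [mΩ : MeasurableSpace Ω] {μ : Measure Ω}
    {E : Type*} [NormedAddCommGroup E] [NormedSpace ℝ E]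
    {s : Set Ω} (hs : MeasurableSet s) (t : Set Ω) (f : Ω → E) :
    ∫ x in t, f x ∂(μ[|s]) = (μ s).toReal⁻¹ • ∫ x in t ∩ s, f x ∂μ := by
  rw [ProbabilityTheory.cond, Measure.restrict_smul, Measure.restrict_restrict' hs,
    integral_smul_measure, ENNReal.toReal_inv]

lemma integrable_cond {Ω : Type*} [mΩ : MeasurableSpace Ω] {μ : Measure Ω}
    [IsFiniteMeasure μ] {E : Type*} [NormedAddCommGroup E]
    {s : Set Ω} (hs0 : μ s ≠ 0) {f : Ω → E} (hf : Integrable f μ) :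
    Integrable f (μ[|s]) := by
  rw [ProbabilityTheory.cond]
  exact (hf.restrict).smul_measure (ENNReal.inv_ne_top.2 hs0)
lemma transfer_ae {Ω : Type*} {m : MeasurableSpace Ω} [mΩ : MeasurableSpace Ω]
    (hm : m ≤ mΩ) (μ : Measure Ω) [IsProbabilityMeasure μ] [SigmaFinite (μ.trim hm)]
    {s : Set Ω} (hs : MeasurableSet[mΩ] s)
    (hpos : ∀ᵐ ω ∂μ, 0 < (μ[s.indicator (fun _ => (1 : ℝ)) | m]) ω)
    {E : Type*} [NormedAddCommGroup E] [NormedSpace ℝ E]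
    {f g : Ω → E} (hf : StronglyMeasurable[m] f) (hg : StronglyMeasurable[m] g)
    (h : f =ᵐ[μ[|s]] g) : f =ᵐ[μ] g := by
  have hind : Integrable (s.indicator (fun _ => (1 : ℝ))) μ :=
    (integrable_const (1 : ℝ)).indicator hs
  set t : Set Ω := {x | f x = g x}ᶜ with ht_def
  have htm : MeasurableSet[m] t := (hf.measurableSet_eq_fun hg).compl
  have hst : μ (s ∩ t) = 0 := by
    rw [Filter.EventuallyEq, ae_iff] at h
    have h2 : μ[|s] t = 0 := by rw [ht_def, Set.compl_setOf]; exact h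
    rw [cond_apply hs, mul_eq_zero, or_iff_right] at h2
    · exact h2
    · intro h3
      rw [ENNReal.inv_eq_zero] at h3
      exact (measure_ne_top μ s) h3
  have hzero : ∫ x in t, (μ[s.indicator (fun _ => (1 : ℝ)) | m]) x ∂μ = 0 := by
    rw [setIntegral_condExp hm hind htm, setIntegral_indicator hs, setIntegral_const,
      Set.inter_comm, measureReal_def, hst]
    simp
  have hcint : Integrable (t.indicator (μ[s.indicator (fun _ => (1 : ℝ)) | m])) μ :=
    integrable_condExp.indicator (hm t htm)
  have hnn : 0 ≤ᵐ[μ] t.indicator (μ[s.indicator (fun _ => (1 : ℝ)) | m]) := by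
    filter_upwards [hpos] with ω hω
    by_cases hωt : ω ∈ t
    · simp [Set.indicator_of_mem hωt, hω.le]
    · simp [Set.indicator_of_notMem hωt]
  rw [← integral_indicator (hm t htm), integral_eq_zero_iff_of_nonneg_ae hnn hcint] at hzero
  filter_upwards [hzero, hpos] with ω h0ω hposω
  by_contra hne
  have hωt : ω ∈ t := hne
  rw [Pi.zero_apply, Set.indicator_of_mem hωt] at h0ω
  exact absurd h0ω (ne_of_gt hposω)
lemma condexp_affine {Ω : Type*} {m : MeasurableSpace Ω} [mΩ : MeasurableSpace Ω]
    (hm : m ≤ mΩ) (ν : Measure Ω) [IsProbabilityMeasure ν] {k : ℕ}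
    {U : Ω → Fin k → ℝ} {W e : Ω → ℝ} (κ : ℝ) (d : Fin k → ℝ)
    (hWint : Integrable W ν) (hUint : Integrable U ν) (heint : Integrable e ν)
    (hW : W =ᵐ[ν] fun ω => e ω + (κ + d ⬝ᵥ U ω))
    (hezero : ∀ t, MeasurableSet[m] t → ∫ x in t, e x ∂ν = 0) :
    (fun ω => κ + d ⬝ᵥ (ν[U|m]) ω) =ᵐ[ν] ν[W|m] := by
  have hdU : Integrable (fun ω => d ⬝ᵥ U ω) ν := (dpCLM d).integrable_comp hUint
  have hgint : Integrable (fun ω => κ + d ⬝ᵥ (ν[U|m]) ω) ν :=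
    (integrable_const κ).add ((dpCLM d).integrable_comp integrable_condExp)
  refine ae_eq_condExp_of_forall_setIntegral_eq hm hWint
    (fun t _ _ => hgint.integrableOn) (fun t htm htν => ?_) ?_
  · have hL : ∫ x in t, W x ∂ν = ∫ x in t, (e x + (κ + d ⬝ᵥ U x)) ∂ν :=
      setIntegral_congr_ae (hm t htm) (hW.mono fun x hx _ => hx)
    have e1 : ∫ x in t, (e x + (κ + d ⬝ᵥ U x)) ∂ν
        = (∫ x in t, e x ∂ν) + ∫ x in t, (κ + d ⬝ᵥ U x) ∂ν :=
      integral_add heint.integrableOn (((integrable_const κ).add hdU).integrableOn)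
    have e2 : ∫ x in t, (κ + d ⬝ᵥ U x) ∂ν
        = (∫ x in t, (κ : ℝ) ∂ν) + ∫ x in t, d ⬝ᵥ U x ∂ν :=
      integral_add (integrable_const κ).integrableOn hdU.integrableOn
    have e3 : ∫ x in t, (κ + d ⬝ᵥ (ν[U|m]) x) ∂ν
        = (∫ x in t, (κ : ℝ) ∂ν) + ∫ x in t, d ⬝ᵥ (ν[U|m]) x ∂ν :=
      integral_add (integrable_const κ).integrableOn
        (((dpCLM d).integrable_comp integrable_condExp).integrableOn)
    rw [hL, e1, e2, e3, hezero t htm, zero_add]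
    congr 1
    have h1 : ∫ x in t, dpCLM d ((ν[U|m]) x) ∂ν = dpCLM d (∫ x in t, (ν[U|m]) x ∂ν) :=
      ContinuousLinearMap.integral_comp_comm _ integrable_condExp.integrableOn
    have h2 : ∫ x in t, dpCLM d (U x) ∂ν = dpCLM d (∫ x in t, U x ∂ν) :=
      ContinuousLinearMap.integral_comp_comm _ hUint.integrableOn
    simp only [dpCLM_apply] at h1 h2
    rw [h1, h2, setIntegral_condExp hm hUint htm]
  · exact StronglyMeasurable.aestronglyMeasurable
      (stronglyMeasurable_const.add
        ((dpCLM d).continuous.comp_stronglyMeasurable stronglyMeasurable_condExp))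
lemma stmt12_aux {Ω : Type*} {m : MeasurableSpace Ω} [mΩ : MeasurableSpace Ω]
    (hm : m ≤ mΩ) (μ : Measure Ω) [IsProbabilityMeasure μ]
    {k : ℕ} (U : Ω → Fin k → ℝ) (A : Ω → ℝ) (εY : Ω → ℝ)
    (hU : Measurable U) (hA : Measurable A)
    (c₀ c₂ : ℝ) (c₁ c₃ : Fin k → ℝ)
    (hbin : ∀ ω, A ω = 0 ∨ A ω = 1)
    (hpos : ∀ᵐ ω ∂μ,
      0 < (μ[(fun ω' => if A ω' = 1 then (1 : ℝ) else 0) | m]) ω ∧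
      (μ[(fun ω' => if A ω' = 1 then (1 : ℝ) else 0) | m]) ω < 1)
    (hez : ∀ (a : ℝ) (t : Set Ω), MeasurableSet[m] t →
      ∫ x in t ∩ {ω | A ω = a}, εY x ∂μ = 0)
    (Y : Ω → ℝ)
    (hY : ∀ ω, Y ω = εY ω + (c₀ + c₁ ⬝ᵥ U ω) + A ω * (c₂ + c₃ ⬝ᵥ U ω))
    (Ypot : ℝ → Ω → ℝ)
    (hYpot : ∀ a ω, Ypot a ω = εY ω + (c₀ + c₁ ⬝ᵥ U ω) + a * (c₂ + c₃ ⬝ᵥ U ω))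
    (hYint : Integrable Y μ) (hUint : Integrable U μ)
    (horth : ∀ᵐ ω ∂μ,
      (c₁ + (μ[(fun ω'' => if A ω'' = 0 then (1 : ℝ) else 0) | m]) ω • c₃) ⬝ᵥ
        (((μ[|{ω' | A ω' = 1}])[U | m]) ω - ((μ[|{ω' | A ω' = 0}])[U | m]) ω) = 0) :
    ∀ᵐ ω ∂μ,
      ((μ[|{ω' | A ω' = 1}])[Y | m]) ω - ((μ[|{ω' | A ω' = 0}])[Y | m]) ω =
      (μ[(fun ω' => Ypot 1 ω' - Ypot 0 ω') | m]) ω := by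
  have hUc : ∀ c : Fin k → ℝ, Integrable (fun ω => c ⬝ᵥ U ω) μ :=
    fun c => (dpCLM c).integrable_comp hUint
  have hεYint : Integrable εY μ := by
    have heq : εY = fun ω => Y ω - ((c₀ + c₁ ⬝ᵥ U ω) + A ω * (c₂ + c₃ ⬝ᵥ U ω)) := by
      funext ω; rw [hY ω]; ring
    rw [heq]
    exact hYint.sub (((integrable_const c₀).add (hUc c₁)).add
      (Integrable.bdd_mul ((integrable_const c₂).add (hUc c₃)) hA.aestronglyMeasurable
        (c := 1) (Filter.Eventually.of_forall fun ω => by rcases hbin ω with h | h <;> simp [h])))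
  set s1 : Set Ω := {ω | A ω = 1} with hs1def
  set s0 : Set Ω := {ω | A ω = 0} with hs0def
  have ms1 : MeasurableSet s1 := hA (measurableSet_singleton 1)
  have ms0 : MeasurableSet s0 := hA (measurableSet_singleton 0)
  have heq1 : (fun ω' => if A ω' = 1 then (1 : ℝ) else 0) = s1.indicator (fun _ => 1) := by
    funext ω; by_cases h : A ω = 1 <;>
      simp [Set.indicator_apply, hs1def, Set.mem_setOf_eq, h]
  have heq0 : (fun ω' => if A ω' = 0 then (1 : ℝ) else 0) = s0.indicator (fun _ => 1) := by
    funext ω; by_cases h : A ω = 0 <;>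
      simp [Set.indicator_apply, hs0def, Set.mem_setOf_eq, h]
  have hint1 : Integrable (fun ω' => if A ω' = 1 then (1 : ℝ) else 0) μ := by
    rw [heq1]; exact (integrable_const 1).indicator ms1
  set p := μ[(fun ω' => if A ω' = 1 then (1 : ℝ) else 0) | m] with hpdef
  set q := μ[(fun ω'' => if A ω'' = 0 then (1 : ℝ) else 0) | m] with hqdef
  have hp' : p = μ[s1.indicator (fun _ => (1 : ℝ)) | m] := by rw [hpdef, heq1]
  have hq' : q = μ[s0.indicator (fun _ => (1 : ℝ)) | m] := by rw [hqdef, heq0]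
  have hqeq : q =ᵐ[μ] fun ω => 1 - p ω := by
    have h10 : (fun ω'' => if A ω'' = 0 then (1 : ℝ) else 0)
        = (fun _ => (1 : ℝ)) - (fun ω' => if A ω' = 1 then (1 : ℝ) else 0) := by
      funext ω; rcases hbin ω with h | h <;> simp [h]
    rw [hqdef, h10]
    refine (condExp_sub (integrable_const 1) hint1 m).trans ?_
    rw [condExp_const hm (1 : ℝ)]
    exact Filter.EventuallyEq.rfl
  have hp_pos : ∀ᵐ ω ∂μ, 0 < p ω := hpos.mono fun ω h => h.1
  have hq_pos : ∀ᵐ ω ∂μ, 0 < q ω := by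
    filter_upwards [hqeq, hpos] with ω h1 h2
    rw [h1]; linarith [h2.2]
  haveI : (ae μ).NeBot := ae_neBot.2 (IsProbabilityMeasure.ne_zero μ)
  have hμ1 : μ s1 ≠ 0 := by
    intro h0
    have hz : (fun ω' => if A ω' = 1 then (1 : ℝ) else 0) =ᵐ[μ] 0 := by
      have hmem : ∀ᵐ ω ∂μ, ω ∉ s1 := (measure_eq_zero_iff_ae_notMem (μ := μ)).1 h0
      filter_upwards [hmem] with ω hω
      simp only [Pi.zero_apply]
      exact if_neg hω
    have hz2 : p =ᵐ[μ] 0 := by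
      rw [hpdef]
      exact (condExp_congr_ae hz).trans (by rw [condExp_zero])
    obtain ⟨ω, h1, h2⟩ := (hp_pos.and hz2).exists
    simp only [Pi.zero_apply] at h2
    exact h1.ne' h2
  have hμ0 : μ s0 ≠ 0 := by
    intro h0
    have hz : (fun ω'' => if A ω'' = 0 then (1 : ℝ) else 0) =ᵐ[μ] 0 := by
      have hmem : ∀ᵐ ω ∂μ, ω ∉ s0 := (measure_eq_zero_iff_ae_notMem (μ := μ)).1 h0
      filter_upwards [hmem] with ω hω
      simp only [Pi.zero_apply]
      exact if_neg hω
    have hz2 : q =ᵐ[μ] 0 := by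
      rw [hqdef]
      exact (condExp_congr_ae hz).trans (by rw [condExp_zero])
    obtain ⟨ω, h1, h2⟩ := (hq_pos.and hz2).exists
    simp only [Pi.zero_apply] at h2
    exact h1.ne' h2
  haveI iP1 : IsProbabilityMeasure (μ[|s1]) := cond_isProbabilityMeasure hμ1
  haveI iP0 : IsProbabilityMeasure (μ[|s0]) := cond_isProbabilityMeasure hμ0
  have hA1 : ∀ᵐ ω ∂(μ[|s1]), ω ∈ s1 := by
    rw [ae_iff]
    have : {a | ¬ a ∈ s1} = s1ᶜ := rfl
    rw [this, cond_apply ms1, Set.inter_compl_self, measure_empty, mul_zero]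
  have hA0 : ∀ᵐ ω ∂(μ[|s0]), ω ∈ s0 := by
    rw [ae_iff]
    have : {a | ¬ a ∈ s0} = s0ᶜ := rfl
    rw [this, cond_apply ms0, Set.inter_compl_self, measure_empty, mul_zero]
  -- conditional expectation formula under μ[|s1]
  have key1 : (fun ω => (c₀ + c₂) + (c₁ + c₃) ⬝ᵥ ((μ[|s1])[U | m]) ω)
      =ᵐ[μ[|s1]] (μ[|s1])[Y | m] := by
    refine condexp_affine hm _ (c₀ + c₂) (c₁ + c₃) (integrable_cond hμ1 hYint)
      (integrable_cond hμ1 hUint) (integrable_cond hμ1 hεYint) ?_ ?_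
    · filter_upwards [hA1] with ω hω
      have hω1 : A ω = 1 := hω
      rw [hY ω, hω1]
      simp only [add_dotProduct]
      ring
    · intro t ht
      rw [cond_setIntegral' ms1 t εY, hez 1 t ht, smul_zero]
  have key0 : (fun ω => c₀ + c₁ ⬝ᵥ ((μ[|s0])[U | m]) ω)
      =ᵐ[μ[|s0]] (μ[|s0])[Y | m] := by
    refine condexp_affine hm _ c₀ c₁ (integrable_cond hμ0 hYint)
      (integrable_cond hμ0 hUint) (integrable_cond hμ0 hεYint) ?_ ?_
    · filter_upwards [hA0] with ω hω
      have hω0 : A ω = 0 := hω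
      rw [hY ω, hω0]
      ring
    · intro t ht
      rw [cond_setIntegral' ms0 t εY, hez 0 t ht, smul_zero]
  have keyC : (fun ω => c₂ + c₃ ⬝ᵥ (μ[U | m]) ω)
      =ᵐ[μ] μ[(fun ω' => Ypot 1 ω' - Ypot 0 ω') | m] := by
    have hWint : Integrable (fun ω' => Ypot 1 ω' - Ypot 0 ω') μ := by
      have : (fun ω' => Ypot 1 ω' - Ypot 0 ω') = fun ω => c₂ + c₃ ⬝ᵥ U ω := by
        funext ω; rw [hYpot, hYpot]; ring
      rw [this]
      exact (integrable_const c₂).add (hUc c₃)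
    refine condexp_affine hm μ (e := fun _ => (0 : ℝ)) c₂ c₃ hWint hUint
      (integrable_const 0) (Filter.Eventually.of_forall fun ω => ?_) (fun t ht => by simp)
    show Ypot 1 ω - Ypot 0 ω = (0 : ℝ) + (c₂ + c₃ ⬝ᵥ U ω)
    rw [hYpot, hYpot]
    ring
  -- transfer the conditional-measure identities to μ-a.e. identities
  have hpos1' : ∀ᵐ ω ∂μ, 0 < (μ[s1.indicator (fun _ => (1 : ℝ)) | m]) ω := hp' ▸ hp_pos
  have hpos0' : ∀ᵐ ω ∂μ, 0 < (μ[s0.indicator (fun _ => (1 : ℝ)) | m]) ω := hq' ▸ hq_pos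
  have key1' : (μ[|s1])[Y | m] =ᵐ[μ] fun ω => (c₀ + c₂) + (c₁ + c₃) ⬝ᵥ ((μ[|s1])[U | m]) ω :=
    transfer_ae hm μ ms1 hpos1' stronglyMeasurable_condExp
      (stronglyMeasurable_const.add
        ((dpCLM (c₁ + c₃)).continuous.comp_stronglyMeasurable stronglyMeasurable_condExp))
      key1.symm
  have key0' : (μ[|s0])[Y | m] =ᵐ[μ] fun ω => c₀ + c₁ ⬝ᵥ ((μ[|s0])[U | m]) ω :=
    transfer_ae hm μ ms0 hpos0' stronglyMeasurable_condExp
      (stronglyMeasurable_const.add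
        ((dpCLM c₁).continuous.comp_stronglyMeasurable stronglyMeasurable_condExp))
      key0.symm
  -- pull-out / mixture computation for a generic event s
  have mix : ∀ (s : Set Ω), MeasurableSet s → μ s ≠ 0 →
      Integrable (fun x => (c₃ ⬝ᵥ ((μ[|s])[U | m]) x) *
        (μ[s.indicator (fun _ => (1 : ℝ)) | m]) x) μ ∧
      ∀ t, MeasurableSet[m] t →
        ∫ x in t, (c₃ ⬝ᵥ ((μ[|s])[U | m]) x) *
            (μ[s.indicator (fun _ => (1 : ℝ)) | m]) x ∂μ
          = ∫ x in t ∩ s, c₃ ⬝ᵥ U x ∂μ := by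
    intro s ms hμs
    haveI : IsProbabilityMeasure (μ[|s]) := cond_isProbabilityMeasure hμs
    set g : Ω → ℝ := fun x => c₃ ⬝ᵥ ((μ[|s])[U | m]) x with hgdef
    have hgSM : StronglyMeasurable[m] g :=
      (dpCLM c₃).continuous.comp_stronglyMeasurable stronglyMeasurable_condExp
    have hgμs : Integrable g (μ[|s]) := (dpCLM c₃).integrable_comp integrable_condExp
    have hτ : (μ s).toReal ≠ 0 := ENNReal.toReal_ne_zero.2 ⟨hμs, measure_ne_top μ s⟩
    have hrs : μ.restrict s = μ s • μ[|s] := by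
      rw [ProbabilityTheory.cond, smul_smul,
        ENNReal.mul_inv_cancel hμs (measure_ne_top μ s), one_smul]
    have hmul_ind : (g * s.indicator (fun _ => (1 : ℝ))) = s.indicator g := by
      funext x; by_cases h : x ∈ s <;> simp [h]
    have hgind : Integrable (g * s.indicator (fun _ => (1 : ℝ))) μ := by
      rw [hmul_ind, integrable_indicator_iff ms, IntegrableOn, hrs]
      exact hgμs.smul_measure (measure_ne_top μ s)
    have hindint : Integrable (s.indicator (fun _ => (1 : ℝ))) μ :=
      (integrable_const 1).indicator ms
    have hpull : μ[g * s.indicator (fun _ => (1 : ℝ)) | m]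
        =ᵐ[μ] g * μ[s.indicator (fun _ => (1 : ℝ)) | m] :=
      condExp_mul_of_stronglyMeasurable_left hgSM hgind hindint
    have hμcond : Integrable (g * μ[s.indicator (fun _ => (1 : ℝ)) | m]) μ :=
      integrable_condExp.congr hpull
    have hUs : Integrable U (μ[|s]) := integrable_cond hμs hUint
    constructor
    · exact hμcond
    · intro t ht
      calc ∫ x in t, (c₃ ⬝ᵥ ((μ[|s])[U | m]) x) *
            (μ[s.indicator (fun _ => (1 : ℝ)) | m]) x ∂μ
          = ∫ x in t, (μ[g * s.indicator (fun _ => (1 : ℝ)) | m]) x ∂μ :=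
            setIntegral_congr_ae (hm t ht) (hpull.symm.mono fun x hx _ => hx)
        _ = ∫ x in t, (g * s.indicator (fun _ => (1 : ℝ))) x ∂μ :=
            setIntegral_condExp hm hgind ht
        _ = ∫ x in t, s.indicator g x ∂μ := by rw [hmul_ind]
        _ = ∫ x in t ∩ s, g x ∂μ := setIntegral_indicator ms
        _ = (μ s).toReal • ∫ x in t, g x ∂(μ[|s]) := by
            rw [cond_setIntegral' ms t g, smul_inv_smul₀ hτ]
        _ = (μ s).toReal • ∫ x in t, c₃ ⬝ᵥ U x ∂(μ[|s]) := by
            congr 1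
            have h1 : ∫ x in t, dpCLM c₃ (((μ[|s])[U | m]) x) ∂(μ[|s])
                = dpCLM c₃ (∫ x in t, ((μ[|s])[U | m]) x ∂(μ[|s])) :=
              ContinuousLinearMap.integral_comp_comm _ integrable_condExp.integrableOn
            have h2 : ∫ x in t, dpCLM c₃ (U x) ∂(μ[|s])
                = dpCLM c₃ (∫ x in t, U x ∂(μ[|s])) :=
              ContinuousLinearMap.integral_comp_comm _ hUs.integrableOn
            simp only [dpCLM_apply] at h1 h2
            rw [hgdef]
            rw [h1, h2, setIntegral_condExp hm hUs ht]
        _ = ∫ x in t ∩ s, c₃ ⬝ᵥ U x ∂μ := by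
            rw [cond_setIntegral' ms t (fun x => c₃ ⬝ᵥ U x), smul_inv_smul₀ hτ]
  obtain ⟨hi1, he1⟩ := mix s1 ms1 hμ1
  obtain ⟨hi0, he0⟩ := mix s0 ms0 hμ0
  rw [← hp'] at hi1 he1
  rw [← hq'] at hi0 he0
  have hmix : (fun ω => c₃ ⬝ᵥ (μ[U | m]) ω)
      =ᵐ[μ] fun ω => (c₃ ⬝ᵥ ((μ[|s1])[U | m]) ω) * p ω
        + (c₃ ⬝ᵥ ((μ[|s0])[U | m]) ω) * q ω := by
    refine ae_eq_of_forall_setIntegral_eq_of_sigmaFinite' hm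
      (fun t _ _ => ((dpCLM c₃).integrable_comp integrable_condExp).integrableOn)
      (fun t _ _ => (hi1.add hi0).integrableOn) (fun t ht _ => ?_) ?_ ?_
    · have hLHS : ∫ x in t, c₃ ⬝ᵥ (μ[U | m]) x ∂μ = ∫ x in t, c₃ ⬝ᵥ U x ∂μ := by
        have h1 : ∫ x in t, dpCLM c₃ ((μ[U | m]) x) ∂μ
            = dpCLM c₃ (∫ x in t, (μ[U | m]) x ∂μ) :=
          ContinuousLinearMap.integral_comp_comm _ integrable_condExp.integrableOn
        have h2 : ∫ x in t, dpCLM c₃ (U x) ∂μ = dpCLM c₃ (∫ x in t, U x ∂μ) :=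
          ContinuousLinearMap.integral_comp_comm _ hUint.integrableOn
        simp only [dpCLM_apply] at h1 h2
        rw [h1, h2, setIntegral_condExp hm hUint ht]
      have hRHS : ∫ x in t, ((c₃ ⬝ᵥ ((μ[|s1])[U | m]) x) * p x
            + (c₃ ⬝ᵥ ((μ[|s0])[U | m]) x) * q x) ∂μ
          = ∫ x in t ∩ s1, c₃ ⬝ᵥ U x ∂μ + ∫ x in t ∩ s0, c₃ ⬝ᵥ U x ∂μ := by
        rw [integral_add hi1.integrableOn hi0.integrableOn, he1 t ht, he0 t ht]
      have hcover : (t ∩ s1) ∪ (t ∩ s0) = t := by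
        ext ω
        constructor
        · rintro (⟨h, -⟩ | ⟨h, -⟩) <;> exact h
        · intro h
          rcases hbin ω with h0 | h1
          · exact Or.inr ⟨h, h0⟩
          · exact Or.inl ⟨h, h1⟩
      have hdisj : Disjoint (t ∩ s1) (t ∩ s0) := by
        rw [Set.disjoint_left]
        rintro ω ⟨-, h1⟩ ⟨-, h0⟩
        have h1' : A ω = 1 := h1
        have h0' : A ω = 0 := h0
        exact one_ne_zero (h1' ▸ h0')
      rw [hLHS, hRHS, ← setIntegral_union hdisj ((hm t ht).inter ms0)
        (hUc c₃).integrableOn (hUc c₃).integrableOn, hcover]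
    · exact StronglyMeasurable.aestronglyMeasurable
        ((dpCLM c₃).continuous.comp_stronglyMeasurable stronglyMeasurable_condExp)
    · refine StronglyMeasurable.aestronglyMeasurable ?_
      rw [hp', hq']
      exact (((dpCLM c₃).continuous.comp_stronglyMeasurable
          stronglyMeasurable_condExp).mul stronglyMeasurable_condExp).add
        (((dpCLM c₃).continuous.comp_stronglyMeasurable
          stronglyMeasurable_condExp).mul stronglyMeasurable_condExp)
  -- combine everything
  filter_upwards [key1', key0', keyC.symm, hmix, hqeq, horth] with ω h1 h0 hC hmx hq1p ho
  rw [h1, h0, hC, hmx]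
  have hq1p' : q ω = 1 - p ω := hq1p
  simp only [add_dotProduct, smul_dotProduct, dotProduct_sub, smul_eq_mul] at ho ⊢
  rw [hq1p'] at ho ⊢
  linear_combination ho

/-- In the affine-in-`U` additive noise model, if `c₁ + P(A=0 | Z) c₃` is orthogonal to
`E[U | Z, A=1] − E[U | Z, A=0]` (conditionally on `Z`, almost surely), then the naive
proxy-adjusted estimator `E[Y | Z, A=1] − E[Y | Z, A=0]` equals the true CATE
`E[Y(1) − Y(0) | Z]` almost surely. -/
theorem stmt12 {Ω : Type*} [mΩ : MeasurableSpace Ω]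
    (μ : Measure Ω) [IsProbabilityMeasure μ]
    {k p : ℕ} (U : Ω → Fin k → ℝ) (Z : Ω → Fin p → ℝ) (A : Ω → ℝ) (εY : Ω → ℝ)
    (hU : Measurable U) (hZ : Measurable Z) (hA : Measurable A) (hεY : Measurable εY)
    (c₀ c₂ : ℝ) (c₁ c₃ : Fin k → ℝ)
    -- `A` is binary with positivity `0 < P(A=1 | Z) < 1` a.s.
    (hbin : ∀ ω, A ω = 0 ∨ A ω = 1)
    (hpos : ∀ᵐ ω ∂μ,
      0 < (μ[(fun ω' => if A ω' = 1 then (1 : ℝ) else 0) |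
            MeasurableSpace.comap Z inferInstance]) ω ∧
      (μ[(fun ω' => if A ω' = 1 then (1 : ℝ) else 0) |
            MeasurableSpace.comap Z inferInstance]) ω < 1)
    -- mean-zero noise: `E[ε_Y | U, Z, A] = 0`
    (hnoise : μ[εY | MeasurableSpace.comap (fun ω => (U ω, Z ω, A ω)) inferInstance]
      =ᵐ[μ] 0)
    -- the outcome and potential outcomes
    (Y : Ω → ℝ)
    (hY : ∀ ω, Y ω = εY ω + (c₀ + c₁ ⬝ᵥ U ω) + A ω * (c₂ + c₃ ⬝ᵥ U ω))
    (Ypot : ℝ → Ω → ℝ)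
    (hYpot : ∀ a ω, Ypot a ω = εY ω + (c₀ + c₁ ⬝ᵥ U ω) + a * (c₂ + c₃ ⬝ᵥ U ω))
    -- integrability
    (hYint : Integrable Y μ) (hUint : Integrable U μ)
    -- conditional orthogonality, almost surely
    (horth : ∀ᵐ ω ∂μ,
      (c₁ + (μ[(fun ω'' => if A ω'' = 0 then (1 : ℝ) else 0) |
          MeasurableSpace.comap Z inferInstance]) ω • c₃) ⬝ᵥ
        (((μ[|{ω' | A ω' = 1}])[U | MeasurableSpace.comap Z inferInstance]) ω -
          ((μ[|{ω' | A ω' = 0}])[U | MeasurableSpace.comap Z inferInstance]) ω) = 0) :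
    ∀ᵐ ω ∂μ,
      ((μ[|{ω' | A ω' = 1}])[Y | MeasurableSpace.comap Z inferInstance]) ω -
        ((μ[|{ω' | A ω' = 0}])[Y | MeasurableSpace.comap Z inferInstance]) ω =
      (μ[(fun ω' => Ypot 1 ω' - Ypot 0 ω') | MeasurableSpace.comap Z inferInstance]) ω := by
  have hεYint : Integrable εY μ := by
    have heq : εY = fun ω => Y ω - ((c₀ + c₁ ⬝ᵥ U ω) + A ω * (c₂ + c₃ ⬝ᵥ U ω)) := by
      funext ω; rw [hY ω]; ring
    rw [heq]
    exact hYint.sub (((integrable_const c₀).add ((dpCLM c₁).integrable_comp hUint)).add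
      (Integrable.bdd_mul ((integrable_const c₂).add ((dpCLM c₃).integrable_comp hUint))
        hA.aestronglyMeasurable
        (c := 1) (Filter.Eventually.of_forall fun ω => by rcases hbin ω with h | h <;> simp [h])))
  have hm' : MeasurableSpace.comap (fun ω => (U ω, Z ω, A ω)) inferInstance ≤ mΩ :=
    (hU.prodMk (hZ.prodMk hA)).comap_le
  have hez : ∀ (a : ℝ) (t : Set Ω),
      MeasurableSet[MeasurableSpace.comap Z inferInstance] t →
      ∫ x in t ∩ {ω | A ω = a}, εY x ∂μ = 0 := by
    intro a t ht
    obtain ⟨B, hB, rfl⟩ := ht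
    have hts : MeasurableSet[MeasurableSpace.comap (fun ω => (U ω, Z ω, A ω)) inferInstance]
        (Z ⁻¹' B ∩ {ω | A ω = a}) := by
      refine ⟨Set.univ ×ˢ B ×ˢ {a},
        MeasurableSet.univ.prod (hB.prod (measurableSet_singleton a)), ?_⟩
      ext ω
      simp only [Set.mem_preimage, Set.mem_prod, Set.mem_univ, true_and,
        Set.mem_singleton_iff, Set.mem_inter_iff, Set.mem_setOf_eq]
    calc ∫ x in Z ⁻¹' B ∩ {ω | A ω = a}, εY x ∂μ
        = ∫ x in Z ⁻¹' B ∩ {ω | A ω = a},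
            (μ[εY | MeasurableSpace.comap (fun ω => (U ω, Z ω, A ω)) inferInstance]) x ∂μ :=
          (setIntegral_condExp hm' hεYint hts).symm
      _ = ∫ x in Z ⁻¹' B ∩ {ω | A ω = a}, (0 : Ω → ℝ) x ∂μ :=
          setIntegral_congr_ae (hm' _ hts) (hnoise.mono fun x hx _ => hx)
      _ = 0 := by simp
  exact stmt12_aux hZ.comap_le μ U A εY hU hA c₀ c₂ c₁ c₃ hbin hpos hez Y hY Ypot hYpot
    hYint hUint horth
end
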